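/- arXiv:2310.13151 — 10 statements merged into one kernel-verified Lean document; each statement's English description precedes it below -/
import Mathlib

section
/- For every n ≥ 1 and every family of points p : Fin n → ℍ in the hyperbolic plane, there exists a unique point x ∈ ℍ minimizing the sum of squared distances to the pᵢ; that is, there is a unique x ∈ ℍ such that for all y ∈ ℍ, ∑ i, (dist x (p i))² ≤ ∑ i, (dist y (p i))². -/
open scoped UpperHalfPlane
open Real UpperHalfPlane

lemma my_sinh_le_mul_cosh {t : ℝ} (ht : 0 ≤ t) : Real.sinh t ≤ t * Real.cosh t := by
  have key : MonotoneOn (fun x : ℝ => x * Real.cosh x - Real.sinh x) (Set.Ici 0) := by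
    have hd : ∀ x : ℝ, HasDerivAt (fun x : ℝ => x * Real.cosh x - Real.sinh x)
        (x * Real.sinh x) x := by
      intro x
      have h := ((hasDerivAt_id x).mul (Real.hasDerivAt_cosh x)).sub (Real.hasDerivAt_sinh x)
      exact h.congr_deriv (by simp only [id]; ring)
    apply monotoneOn_of_deriv_nonneg (convex_Ici 0)
    · exact (Continuous.sub (continuous_id.mul Real.continuous_cosh) Real.continuous_sinh).continuousOn
    · intro x hx; exact (hd x).differentiableAt.differentiableWithinAt
    · intro x hx
      rw [interior_Ici, Set.mem_Ioi] at hx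
      rw [(hd x).deriv]
      exact mul_nonneg hx.le (Real.sinh_nonneg_iff.2 hx.le)
  have := key (Set.self_mem_Ici) (Set.mem_Ici.2 ht) ht
  simp only [Real.sinh_zero, Real.cosh_zero, mul_one, zero_mul, sub_zero, zero_sub] at this
  linarith

lemma my_sinh_ratio {u t : ℝ} (hu : 0 ≤ u) (hut : u ≤ t) : t * Real.sinh u ≤ u * Real.sinh t := by
  have key : MonotoneOn (fun x : ℝ => u * Real.sinh x - x * Real.sinh u) (Set.Ici u) := by
    have hd : ∀ x : ℝ, HasDerivAt (fun x : ℝ => u * Real.sinh x - x * Real.sinh u)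
        (u * Real.cosh x - Real.sinh u) x := by
      intro x
      have h := ((hasDerivAt_const x u).mul (Real.hasDerivAt_sinh x)).sub
        ((hasDerivAt_id x).mul (hasDerivAt_const x (Real.sinh u)))
      exact h.congr_deriv (by simp only [id]; ring)
    apply monotoneOn_of_deriv_nonneg (convex_Ici u)
    · exact (Continuous.sub (continuous_const.mul Real.continuous_sinh)
        (continuous_id.mul continuous_const)).continuousOn
    · intro x hx; exact (hd x).differentiableAt.differentiableWithinAt
    · intro x hx
      rw [interior_Ici, Set.mem_Ioi] at hx
      rw [(hd x).deriv]
      have h1 : Real.sinh u ≤ u * Real.cosh u := my_sinh_le_mul_cosh hu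
      have h2 : Real.cosh u ≤ Real.cosh x := by
        rw [Real.cosh_le_cosh, abs_of_nonneg hu, abs_of_nonneg (hu.trans hx.le)]
        exact hx.le
      nlinarith [hu]
  have := key (Set.self_mem_Ici) (Set.mem_Ici.2 hut) hut
  simp only [sub_self] at this
  linarith [this]

/-- For fixed sum of squares, `cosh + cosh` increases as the pair spreads out. -/
lemma my_cosh_rearrange {a b c e : ℝ} (hb : 0 ≤ b) (hbe : b ≤ e) (hec : e ≤ c) (hca : c ≤ a)
    (hsq : a ^ 2 + b ^ 2 = c ^ 2 + e ^ 2) :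
    Real.cosh c + Real.cosh e ≤ Real.cosh a + Real.cosh b := by
  set r2 := a ^ 2 + b ^ 2 with hr2
  have he0 : 0 ≤ e := hb.trans hbe
  have hc0 : 0 ≤ c := he0.trans hec
  have ha0 : 0 ≤ a := hc0.trans hca
  have hcc : r2 ≤ c ^ 2 + c ^ 2 := by nlinarith
  have hb2 : b ^ 2 = r2 - a ^ 2 := by rw [hr2]; ring
  have he2 : e ^ 2 = r2 - c ^ 2 := by rw [hsq]; ring
  have hbs : b = Real.sqrt (r2 - a ^ 2) := by rw [← hb2, Real.sqrt_sq hb]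
  have hes : e = Real.sqrt (r2 - c ^ 2) := by rw [← he2, Real.sqrt_sq he0]
  set F : ℝ → ℝ := fun t => Real.cosh t + Real.cosh (Real.sqrt (r2 - t ^ 2)) with hF
  have hd : ∀ x ∈ Set.Ioo c a, HasDerivAt F
      (Real.sinh x + Real.sinh (Real.sqrt (r2 - x ^ 2)) *
        (1 / (2 * Real.sqrt (r2 - x ^ 2)) * (0 - 2 * x))) x := by
    intro x hx
    have hxr : 0 < r2 - x ^ 2 := by nlinarith [hx.2, hc0.trans hx.1.le]
    have hinner : HasDerivAt (fun t : ℝ => r2 - t ^ 2) (0 - 2 * x) x := by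
      simpa [Pi.sub_def] using (hasDerivAt_const x r2).sub ((hasDerivAt_pow 2 x))
    have hsqrt := (Real.hasDerivAt_sqrt (ne_of_gt hxr)).comp x hinner
    have hcomp := (Real.hasDerivAt_cosh (Real.sqrt (r2 - x ^ 2))).comp x hsqrt
    exact (Real.hasDerivAt_cosh x).add (by simpa [Function.comp_def, mul_assoc] using hcomp)
  have key : MonotoneOn F (Set.Icc c a) := by
    apply monotoneOn_of_deriv_nonneg (convex_Icc c a)
    · apply Continuous.continuousOn
      exact Real.continuous_cosh.add (Real.continuous_cosh.comp
        (Real.continuous_sqrt.comp (continuous_const.sub (continuous_pow 2))))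
    · intro x hx
      rw [interior_Icc] at hx
      exact (hd x hx).differentiableAt.differentiableWithinAt
    · intro x hx
      rw [interior_Icc] at hx
      rw [(hd x hx).deriv]
      have hx0 : 0 < x := hc0.trans_lt hx.1
      set w := Real.sqrt (r2 - x ^ 2) with hw
      have hxr : 0 < r2 - x ^ 2 := by nlinarith [hx.2, hc0.trans hx.1.le]
      have hw0 : 0 < w := Real.sqrt_pos.2 hxr
      have hw2 : w ^ 2 = r2 - x ^ 2 := Real.sq_sqrt hxr.le
      have hwx : w ≤ x := by
        have : w ^ 2 ≤ x ^ 2 := by nlinarith [hx.1, hc0]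
        nlinarith
      have hratio := my_sinh_ratio hw0.le hwx
      have expand : Real.sinh x + Real.sinh w * (1 / (2 * w) * (0 - 2 * x)) =
          (w * Real.sinh x - x * Real.sinh w) / w := by
        field_simp; ring
      rw [expand]
      apply div_nonneg _ hw0.le
      linarith
  have := key (Set.mem_Icc.2 ⟨le_refl c, hca⟩) (Set.mem_Icc.2 ⟨hca, le_refl a⟩) hca
  simpa only [hF, ← hbs, ← hes] using this

lemma my_comparison {u v s t : ℝ} (hu : 0 ≤ u) (hv : 0 ≤ v) (hs : 0 ≤ s) (ht : 0 ≤ t)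
    (hmed : Real.cosh t * Real.cosh s = (Real.cosh u + Real.cosh v) / 2)
    (h1 : |u - v| ≤ 2 * s) (h2 : 2 * s ≤ u + v) :
    t ^ 2 + s ^ 2 ≤ (u ^ 2 + v ^ 2) / 2 := by
  wlog hvu : v ≤ u generalizing u v
  · have hmed' : Real.cosh t * Real.cosh s = (Real.cosh v + Real.cosh u) / 2 := by
      rw [hmed]; ring
    have h1' : |v - u| ≤ 2 * s := by rwa [abs_sub_comm]
    have := this hv hu hmed' h1' (by linarith) (le_of_not_ge hvu)
    linarith
  set A := (u + v) / 2 with hA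
  set B := (u - v) / 2 with hB
  have hB0 : 0 ≤ B := by rw [hB]; linarith
  have hA0 : 0 ≤ A := by rw [hA]; linarith
  have hBA : B ≤ A := by rw [hA, hB]; linarith
  have habs : |u - v| = 2 * B := by rw [abs_of_nonneg (by linarith)]; rw [hB]; ring
  have hsB : B ≤ s := by rw [habs] at h1; linarith
  have hsA : s ≤ A := by rw [hA]; linarith
  have hAB2 : A ^ 2 + B ^ 2 = (u ^ 2 + v ^ 2) / 2 := by rw [hA, hB]; ring
  have hprod : (Real.cosh u + Real.cosh v) / 2 = Real.cosh A * Real.cosh B := by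
    have e1 : A + B = u := by rw [hA, hB]; ring
    have e2 : A - B = v := by rw [hA, hB]; ring
    rw [← e1, ← e2, Real.cosh_add, Real.cosh_sub]; ring
  have htau2 : 0 ≤ A ^ 2 + B ^ 2 - s ^ 2 := by nlinarith
  clear_value A B
  obtain ⟨τ, hτ0, hτ2⟩ : ∃ τ : ℝ, 0 ≤ τ ∧ τ ^ 2 = A ^ 2 + B ^ 2 - s ^ 2 :=
    ⟨Real.sqrt (A ^ 2 + B ^ 2 - s ^ 2), Real.sqrt_nonneg _, Real.sq_sqrt htau2⟩
  have hst : A * B ≤ s * τ := by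
    have hB2 : B ^ 2 ≤ s ^ 2 := by nlinarith
    have hA2 : s ^ 2 ≤ A ^ 2 := by nlinarith
    have hfac : (0:ℝ) ≤ (s ^ 2 - B ^ 2) * (A ^ 2 - s ^ 2) :=
      mul_nonneg (by linarith) (by linarith)
    have hsq' : (A * B) ^ 2 ≤ (s * τ) ^ 2 := by
      have e : (s * τ) ^ 2 = s ^ 2 * (A ^ 2 + B ^ 2 - s ^ 2) := by rw [mul_pow, hτ2]
      have e2 : s ^ 2 * (A ^ 2 + B ^ 2 - s ^ 2) - (A * B) ^ 2
          = (s ^ 2 - B ^ 2) * (A ^ 2 - s ^ 2) := by ring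
      linarith [e2, hfac, e.ge, e.le]
    nlinarith [mul_nonneg hA0 hB0, mul_nonneg hs hτ0]
  have hkey : Real.cosh (A + B) + Real.cosh (A - B) ≤
      Real.cosh (s + τ) + Real.cosh (|s - τ|) := by
    have hbe : |s - τ| ≤ A - B := by
      have hsq' : (s - τ) ^ 2 ≤ (A - B) ^ 2 := by
        have e2 : (A - B) ^ 2 - (s - τ) ^ 2 = 2 * (s * τ - A * B)
            - (τ ^ 2 - (A ^ 2 + B ^ 2 - s ^ 2)) := by ring
        linarith [e2, hst, hτ2.le, hτ2.ge]
      have h := Real.sqrt_le_sqrt hsq'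
      rwa [Real.sqrt_sq_eq_abs, Real.sqrt_sq (by linarith : (0:ℝ) ≤ A - B)] at h
    have hca : A + B ≤ s + τ := by
      have hsq' : (A + B) ^ 2 ≤ (s + τ) ^ 2 := by
        have e2 : (s + τ) ^ 2 - (A + B) ^ 2 = 2 * (s * τ - A * B)
            + (τ ^ 2 - (A ^ 2 + B ^ 2 - s ^ 2)) := by ring
        linarith [e2, hst, hτ2.le, hτ2.ge]
      have h := Real.sqrt_le_sqrt hsq'
      rwa [Real.sqrt_sq (by linarith : (0:ℝ) ≤ A + B),
        Real.sqrt_sq (by linarith : (0:ℝ) ≤ s + τ)] at h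
    exact my_cosh_rearrange (abs_nonneg _) hbe (by linarith) hca
      (by rw [sq_abs]; linear_combination 2 * hτ2)
  rw [Real.cosh_abs] at hkey
  have hsum : Real.cosh (s + τ) + Real.cosh (s - τ) = 2 * (Real.cosh s * Real.cosh τ) := by
    rw [Real.cosh_add, Real.cosh_sub]; ring
  have hAB : Real.cosh (A + B) + Real.cosh (A - B) = 2 * (Real.cosh A * Real.cosh B) := by
    rw [Real.cosh_add, Real.cosh_sub]; ring
  have hcosh_le : Real.cosh t ≤ Real.cosh τ := by
    have hsp := Real.cosh_pos s
    have : Real.cosh t * Real.cosh s ≤ Real.cosh τ * Real.cosh s := by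
      rw [hmed, hprod, mul_comm (Real.cosh τ)]
      linarith [hkey, hsum, hAB]
    exact le_of_mul_le_mul_right this hsp
  have htτ : t ≤ τ := by
    have := Real.cosh_le_cosh.1 hcosh_le
    rwa [abs_of_nonneg ht, abs_of_nonneg hτ0] at this
  linarith [pow_le_pow_left₀ ht htτ 2, hτ2, hAB2]

noncomputable def myMid (x y : ℍ) : ℍ :=
  UpperHalfPlane.mk ⟨(x.re * y.im + y.re * x.im) / (x.im + y.im),
    2 * Real.cosh (dist x y / 2) * (x.im * y.im / (x.im + y.im))⟩ (by
      have hx := x.im_pos; have hy := y.im_pos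
      have hc := Real.cosh_pos (dist x y / 2)
      show 0 < 2 * Real.cosh (dist x y / 2) * (x.im * y.im / (x.im + y.im))
      positivity)

lemma myMid_re (x y : ℍ) : (myMid x y).re = (x.re * y.im + y.re * x.im) / (x.im + y.im) := rfl
lemma myMid_im (x y : ℍ) :
    (myMid x y).im = 2 * Real.cosh (dist x y / 2) * (x.im * y.im / (x.im + y.im)) := rfl

lemma my_cosh_dist (z w : ℍ) : Real.cosh (dist z w)
    = ((z.re - w.re) ^ 2 + z.im ^ 2 + w.im ^ 2) / (2 * z.im * w.im) := by
  rw [UpperHalfPlane.cosh_dist, Complex.dist_eq_re_im, Real.sq_sqrt (by positivity)]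
  have hz := z.im_pos; have hw := w.im_pos
  rw [UpperHalfPlane.coe_re, UpperHalfPlane.coe_re, UpperHalfPlane.coe_im, UpperHalfPlane.coe_im]
  field_simp
  ring

lemma my_median (x y z : ℍ) :
    Real.cosh (dist z (myMid x y)) * (2 * Real.cosh (dist x y / 2))
      = Real.cosh (dist z x) + Real.cosh (dist z y) := by
  have hx := x.im_pos; have hy := y.im_pos; have hz := z.im_pos
  set e := Real.cosh (dist x y / 2) with he
  have he0 : 0 < e := Real.cosh_pos _
  have hee : 4 * x.im * y.im * e ^ 2 = (x.re - y.re) ^ 2 + (x.im + y.im) ^ 2 := by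
    have h2 : Real.cosh (dist x y) = 2 * e ^ 2 - 1 := by
      rw [show dist x y = 2 * (dist x y / 2) by ring, Real.cosh_two_mul, he, Real.cosh_sq]
      ring
    rw [my_cosh_dist] at h2
    field_simp at h2
    nlinarith [h2]
  rw [my_cosh_dist, my_cosh_dist, my_cosh_dist, myMid_re, myMid_im, ← he]
  have hxy : x.im + y.im ≠ 0 := by positivity
  field_simp
  linear_combination (x.im * y.im) * hee

lemma my_mid_ineq (x y z : ℍ) :
    dist z (myMid x y) ^ 2 ≤ (dist z x ^ 2 + dist z y ^ 2) / 2 - (dist x y / 2) ^ 2 := by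
  have hmed : Real.cosh (dist z (myMid x y)) * Real.cosh (dist x y / 2)
      = (Real.cosh (dist z x) + Real.cosh (dist z y)) / 2 := by
    have := my_median x y z
    linarith [this]
  have h1 : |dist z x - dist z y| ≤ 2 * (dist x y / 2) := by
    rw [mul_div_cancel₀ _ (two_ne_zero)]
    simpa [dist_comm] using abs_dist_sub_le x y z
  have h2 : 2 * (dist x y / 2) ≤ dist z x + dist z y := by
    rw [mul_div_cancel₀ _ (two_ne_zero)]
    calc dist x y ≤ dist x z + dist z y := dist_triangle x z y
    _ = dist z x + dist z y := by rw [dist_comm x z]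
  have := my_comparison dist_nonneg dist_nonneg (by positivity) dist_nonneg hmed h1 h2
  linarith

/-- Existence and uniqueness of the Riemannian (Karcher) center of mass of finitely
many points in the hyperbolic plane: there is a unique point minimizing the sum of
squared hyperbolic distances. -/
theorem exists_unique_center_of_mass (n : ℕ) (hn : 1 ≤ n) (p : Fin n → ℍ) :
    ∃! x : ℍ, ∀ y : ℍ, ∑ i, (dist x (p i)) ^ 2 ≤ ∑ i, (dist y (p i)) ^ 2 := by
  set f : ℍ → ℝ := fun y => ∑ i, (dist y (p i)) ^ 2 with hf
  have hcont : Continuous f := by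
    apply continuous_finset_sum
    intro i _
    exact (continuous_id.dist continuous_const).pow 2
  have hf0 : ∀ y, 0 ≤ f y := fun y => Finset.sum_nonneg fun i _ => sq_nonneg _
  have hsingle : ∀ (y : ℍ) (i : Fin n), dist y (p i) ^ 2 ≤ f y := by
    intro y i
    exact Finset.single_le_sum (fun j _ => sq_nonneg (dist y (p j))) (Finset.mem_univ i)
  set i0 : Fin n := ⟨0, hn⟩
  set z0 : ℍ := p i0 with hz0
  set R : ℝ := Real.sqrt (f z0) + 1 with hR
  have hR0 : 0 ≤ R := by positivity
  have hRsq : f z0 < R ^ 2 := by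
    have h := Real.sq_sqrt (hf0 z0)
    nlinarith [Real.sqrt_nonneg (f z0)]
  obtain ⟨x, hxK, hxmin⟩ := (isCompact_closedBall z0 R).exists_isMinOn
    ⟨z0, Metric.mem_closedBall_self hR0⟩ hcont.continuousOn
  have hglobal : ∀ y : ℍ, f x ≤ f y := by
    intro y
    by_cases hy : y ∈ Metric.closedBall z0 R
    · exact hxmin hy
    · have hy' : R < dist y z0 := by
        rw [Metric.mem_closedBall, not_le] at hy
        exact hy
      have : R ^ 2 < dist y z0 ^ 2 := by nlinarith
      refine le_of_lt ?_
      calc f x ≤ f z0 := hxmin (Metric.mem_closedBall_self hR0)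
      _ < R ^ 2 := hRsq
      _ < dist y z0 ^ 2 := this
      _ ≤ f y := hsingle y i0
  refine ⟨x, hglobal, ?_⟩
  intro y hy
  by_contra hne
  have hfeq : f y = f x := le_antisymm (hy x) (hglobal y)
  set m := myMid y x with hm
  set s : ℝ := dist y x / 2 with hs
  have hs0 : 0 < s := by
    rw [hs]
    have := dist_pos.2 hne
    positivity
  have hsum : f m ≤ (f y + f x) / 2 - (n : ℝ) * s ^ 2 := by
    have hterm : ∀ i : Fin n, dist m (p i) ^ 2
        ≤ (dist y (p i) ^ 2 + dist x (p i) ^ 2) / 2 - s ^ 2 := by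
      intro i
      have := my_mid_ineq y x (p i)
      simpa [dist_comm, hs] using this
    calc f m ≤ ∑ i, ((dist y (p i) ^ 2 + dist x (p i) ^ 2) / 2 - s ^ 2) :=
        Finset.sum_le_sum fun i _ => hterm i
    _ = (f y + f x) / 2 - (n : ℝ) * s ^ 2 := by
        rw [Finset.sum_sub_distrib, Finset.sum_const, Finset.card_univ, Fintype.card_fin]
        rw [hf]
        push_cast
        rw [← Finset.sum_add_distrib, ← Finset.sum_div]
        simp [nsmul_eq_mul]
  have hn1 : (1 : ℝ) ≤ (n : ℝ) := by exact_mod_cast hn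
  have := hglobal m
  nlinarith [hsum, hfeq, hs0, sq_nonneg s]
end

section
/- Let r ≥ 1, let Γ be a subgroup of SL(2,ℝ), let ρ : Γ →* (Fin r → SL(2,ℝ)) be a group homomorphism, let L ≥ 0, and let f : ℍ → (Fin r → ℍ) be L-Lipschitz (for the hyperbolic metric on ℍ and the supremum metric on Fin r → ℍ) and ρ-equivariant, i.e. (f (γ • z)) i = (ρ(γ) i) • (f z) i for all γ ∈ Γ, z ∈ ℍ, i. Then for every γ ∈ Γ and every index i, the infimum displacement of ρ(γ) i is bounded by L times the infimum displacement of γ: (⨅ w : ℍ, dist ((ρ(γ) i) • w) w) ≤ L · (⨅ z : ℍ, dist (γ • z) z). -/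
open scoped UpperHalfPlane MatrixGroups

/-- If `f : ℍ → ℍ^r` is `L`-Lipschitz and `ρ`-equivariant, then the translation
length (infimum displacement) of each factor `ρ(γ) i` is at most `L` times the
translation length of `γ`. -/
theorem translation_length_le_of_equivariant_lipschitz
    (r : ℕ) (hr : 1 ≤ r)
    (Γ : Subgroup SL(2, ℝ))
    (ρ : Γ →* (Fin r → SL(2, ℝ))) (L : ℝ) (hL : 0 ≤ L)
    (f : ℍ → (Fin r → ℍ))
    (hfLip : ∀ z w : ℍ, dist (f z) (f w) ≤ L * dist z w)
    (hfequiv : ∀ γ : Γ, ∀ z : ℍ, ∀ i : Fin r,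
      f ((γ : SL(2, ℝ)) • z) i = (ρ γ i) • (f z i)) :
    ∀ γ : Γ, ∀ i : Fin r,
      (⨅ w : ℍ, dist ((ρ γ i) • w) w) ≤ L * ⨅ z : ℍ, dist ((γ : SL(2, ℝ)) • z) z := by
  intro γ i
  rw [Real.mul_iInf_of_nonneg hL]
  refine le_ciInf fun z => ?_
  calc (⨅ w : ℍ, dist ((ρ γ i) • w) w)
      ≤ dist ((ρ γ i) • (f z i)) (f z i) :=
        ciInf_le ⟨0, fun x ⟨w, hw⟩ => hw ▸ dist_nonneg⟩ (f z i)
    _ = dist (f ((γ : SL(2, ℝ)) • z) i) (f z i) := by rw [hfequiv]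
    _ ≤ dist (f ((γ : SL(2, ℝ)) • z)) (f z) := dist_le_pi_dist _ _ i
    _ ≤ L * dist ((γ : SL(2, ℝ)) • z) z := hfLip _ _
end

section
/- Let g ∈ SL(2,ℝ) and let t = |trace of the matrix g|. If t > 2 (g is hyperbolic), then the translation length of the action of g on the hyperbolic plane equals twice the logarithm of the largest eigenvalue of g: ⨅ z : ℍ, dist (g • z) z = 2 · Real.log ((t + Real.sqrt (t² − 4)) / 2). -/
open scoped UpperHalfPlane MatrixGroups
open UpperHalfPlane Complex
set_option maxHeartbeats 1000000

lemma coshDistSmul (g : SL(2, ℝ)) (z : ℍ) :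
    Real.cosh (dist (g • z) z) =
      1 + Complex.normSq (g 1 0 * (z : ℂ) ^ 2 + ((g 1 1 : ℂ) - g 0 0) * z - g 0 1)
        / (2 * z.im ^ 2) := by
  set a : ℝ := g 0 0
  set b : ℝ := g 0 1
  set c : ℝ := g 1 0
  set d : ℝ := g 1 1
  have hdet : a * d - b * c = 1 := by
    have := g.2
    rwa [Matrix.det_fin_two] at this
  have hy : 0 < z.im := z.2
  have hden : (c * (z : ℂ) + d) ≠ 0 := by
    intro h
    have him : c * z.im = 0 := by
      have := congrArg Complex.im h
      simpa using this
    have hc : c = 0 := by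
      rcases mul_eq_zero.1 him with h' | h'
      · exact h'
      · exact absurd h' hy.ne'
    have hre : d = 0 := by
      have := congrArg Complex.re h
      simp [hc] at this
      exact_mod_cast this
    rw [hc, hre] at hdet; simp at hdet
  have hw : ((g • z : ℍ) : ℂ) = ((a : ℂ) * z + b) / ((c : ℂ) * z + d) := by
    rw [UpperHalfPlane.specialLinearGroup_apply]
    simp
    rfl
  set N : ℝ := Complex.normSq ((c : ℂ) * z + d) with hN
  have hNpos : 0 < N := by
    rw [hN]; exact Complex.normSq_pos.2 hden
  have him : (g • z).im = z.im / N := by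
    have hN2 : N = (c * z.re + d) ^ 2 + (c * z.im) ^ 2 := by
      simp [hN, Complex.normSq_apply]; ring
    clear_value N
    rw [← UpperHalfPlane.coe_im, hw, Complex.div_im]
    simp only [Complex.add_im, Complex.add_re, Complex.mul_im, Complex.mul_re,
      Complex.ofReal_re, Complex.ofReal_im, UpperHalfPlane.coe_re, UpperHalfPlane.coe_im,
      ← hN]
    field_simp
    linear_combination z.im * hdet
  rw [UpperHalfPlane.cosh_dist, him]
  have hQ : ((↑(g • z) : ℂ) - z) * ((c : ℂ) * z + d)
      = -((c : ℂ) * (z : ℂ) ^ 2 + ((d : ℂ) - a) * z - b) := by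
    rw [hw, sub_mul, div_mul_cancel₀ _ hden]; ring
  have hns : Complex.normSq ((↑(g • z) : ℂ) - z) * N
      = Complex.normSq ((c : ℂ) * (z : ℂ) ^ 2 + ((d : ℂ) - a) * z - b) := by
    rw [hN, ← Complex.normSq_mul, hQ, Complex.normSq_neg]
  have hd2 : dist (↑(g • z) : ℂ) (z : ℂ) ^ 2
      = Complex.normSq ((↑(g • z) : ℂ) - z) := by
    rw [Complex.dist_eq, Complex.sq_norm]
  have hne : Complex.normSq ((↑(g • z) : ℂ) - z)
      = Complex.normSq ((c : ℂ) * (z : ℂ) ^ 2 + ((d : ℂ) - a) * z - b) / N :=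
    (eq_div_iff hNpos.ne').2 hns
  rw [hd2, hne]
  have hy' : z.im ≠ 0 := hy.ne'
  field_simp

lemma normSqQ (a b c d : ℝ) (w : ℂ) (hdet : a * d - b * c = 1) :
    Complex.normSq ((c : ℂ) * w ^ 2 + ((d : ℂ) - a) * w - b)
      = ((a + d) ^ 2 - 4) * w.im ^ 2
        + (c * (w.re ^ 2 + w.im ^ 2) + (d - a) * w.re - b) ^ 2 := by
  rw [Complex.normSq_apply]
  simp only [pow_two, Complex.add_re, Complex.add_im, Complex.sub_re, Complex.sub_im,
    Complex.mul_re, Complex.mul_im, Complex.ofReal_re, Complex.ofReal_im]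
  ring_nf
  linear_combination (-4 * w.im ^ 2) * hdet

/-- Displacement formula for a hyperbolic element of `SL(2, ℝ)`: if `|tr g| > 2`,
then the translation length of `g` acting on the hyperbolic plane equals
`2 log λ`, where `λ = (|tr g| + √((tr g)² − 4))/2` is the largest eigenvalue. -/
theorem translation_length_eq_two_log_eigenvalue
    (g : SL(2, ℝ)) (t : ℝ) (ht : t = |Matrix.trace (g : Matrix (Fin 2) (Fin 2) ℝ)|)
    (hhyp : 2 < t) :
    (⨅ z : ℍ, dist (g • z) z) = 2 * Real.log ((t + Real.sqrt (t ^ 2 - 4)) / 2) := by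
  set a : ℝ := g 0 0 with ha
  set b : ℝ := g 0 1 with hb
  set c : ℝ := g 1 0 with hc0
  set d : ℝ := g 1 1 with hd
  have hdet : a * d - b * c = 1 := by
    have := g.2
    rwa [Matrix.det_fin_two] at this
  have ht' : t = |a + d| := by rw [ht, Matrix.trace_fin_two]
  have ht2 : t ^ 2 = (a + d) ^ 2 := by rw [ht']; exact sq_abs _
  have hD : 0 < t ^ 2 - 4 := by nlinarith
  set s : ℝ := Real.sqrt (t ^ 2 - 4) with hs
  have hs2 : s ^ 2 = t ^ 2 - 4 := Real.sq_sqrt hD.le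
  have hsnn : 0 ≤ s := Real.sqrt_nonneg _
  have hspos : 0 < s := Real.sqrt_pos.2 hD
  clear_value s
  set lam : ℝ := (t + s) / 2 with hlam
  have hlam1 : 1 ≤ lam := by rw [hlam]; nlinarith
  have hlam0 : 0 < lam := zero_lt_one.trans_le hlam1
  have hlamsq : lam ^ 2 = t * lam - 1 := by
    rw [hlam]; linear_combination (1/4 : ℝ) * hs2
  clear_value lam
  set L : ℝ := 2 * Real.log lam with hL
  have hLnn : 0 ≤ L := mul_nonneg (by norm_num) (Real.log_nonneg hlam1)
  clear_value L
  have hcosh : Real.cosh L = (t ^ 2 - 2) / 2 := by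
    rw [hL, Real.cosh_eq,
      show (2 : ℝ) * Real.log lam = Real.log lam + Real.log lam by ring,
      Real.exp_add, Real.exp_log hlam0, Real.exp_neg, Real.exp_add, Real.exp_log hlam0]
    have hne : lam * lam ≠ 0 := by positivity
    field_simp
    linear_combination (lam ^ 2 + t * lam + 1) * hlamsq
  -- lower bound for every z
  have key : ∀ z : ℍ, L ≤ dist (g • z) z := by
    intro z
    have hy : 0 < z.im := z.2
    have hQ : (t ^ 2 - 4) * z.im ^ 2
        ≤ Complex.normSq ((c : ℂ) * (z : ℂ) ^ 2 + ((d : ℂ) - a) * (z : ℂ) - b) := by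
      rw [normSqQ a b c d (z : ℂ) hdet]
      simp only [UpperHalfPlane.coe_re, UpperHalfPlane.coe_im]
      nlinarith [sq_nonneg (c * (z.re ^ 2 + z.im ^ 2) + (d - a) * z.re - b)]
    have hcle : Real.cosh L ≤ Real.cosh (dist (g • z) z) := by
      rw [hcosh, coshDistSmul g z]
      have h2y : (0 : ℝ) < 2 * z.im ^ 2 := by positivity
      have : (t ^ 2 - 4) / 2
          ≤ Complex.normSq ((c : ℂ) * (z : ℂ) ^ 2 + ((d : ℂ) - a) * (z : ℂ) - b)
            / (2 * z.im ^ 2) := by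
        rw [div_le_div_iff₀ two_pos h2y]
        nlinarith [hQ]
      linarith
    calc L = |L| := (_root_.abs_of_nonneg hLnn).symm
      _ ≤ |dist (g • z) z| := Real.cosh_le_cosh.1 hcle
      _ = dist (g • z) z := _root_.abs_of_nonneg dist_nonneg
  -- an attaining point
  obtain ⟨z₀, hz₀⟩ : ∃ z : ℍ,
      Complex.normSq ((c : ℂ) * (z : ℂ) ^ 2 + ((d : ℂ) - a) * (z : ℂ) - b)
        = (t ^ 2 - 4) * z.im ^ 2 := by
    obtain ⟨w, hwim, hweq⟩ : ∃ w : ℂ,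
        0 < w.im ∧ c * (w.re ^ 2 + w.im ^ 2) + (d - a) * w.re - b = 0 := by
      by_cases hc : c = 0
      · have hda : (d - a) ^ 2 = t ^ 2 - 4 := by
          linear_combination (-4 : ℝ) * hdet - 4 * b * hc - ht2
        have hda0 : d - a ≠ 0 := by
          intro h; rw [h] at hda; norm_num at hda; linarith
        refine ⟨⟨b / (d - a), 1⟩, ?_, ?_⟩
        · show (0 : ℝ) < 1; norm_num
        · show c * ((b / (d - a)) ^ 2 + 1 ^ 2) + (d - a) * (b / (d - a)) - b = 0
          rw [hc]
          field_simp
          ring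
      · have hcabs : (0 : ℝ) < |c| := abs_pos.2 hc
        refine ⟨⟨(a - d) / (2 * c), s / (2 * |c|)⟩, ?_, ?_⟩
        · show (0 : ℝ) < s / (2 * |c|); positivity
        · show c * (((a - d) / (2 * c)) ^ 2 + (s / (2 * |c|)) ^ 2)
              + (d - a) * ((a - d) / (2 * c)) - b = 0
          have habs : |c| ^ 2 = c ^ 2 := sq_abs c
          field_simp
          linear_combination c^2*hs2 + c^2*ht2
            + (-(a-d)^2 - 4*b*c)*habs + 4*c^2*hdet
    refine ⟨UpperHalfPlane.mk w hwim, ?_⟩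
    rw [normSqQ a b c d _ hdet, UpperHalfPlane.coe_mk, UpperHalfPlane.mk_im, hweq]
    linear_combination (-w.im^2) * ht2
  -- distance at the attaining point
  have hd0 : dist (g • z₀) z₀ = L := by
    have hy : 0 < z₀.im := z₀.2
    have hceq : Real.cosh (dist (g • z₀) z₀) = Real.cosh L := by
      rw [hcosh, coshDistSmul g z₀, hz₀]
      field_simp
      ring
    have h1 : |dist (g • z₀) z₀| ≤ |L| := Real.cosh_le_cosh.1 hceq.le
    have h2 : |L| ≤ |dist (g • z₀) z₀| := Real.cosh_le_cosh.1 hceq.ge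
    have := le_antisymm h1 h2
    rwa [_root_.abs_of_nonneg dist_nonneg, _root_.abs_of_nonneg hLnn] at this
  have hbdd : BddBelow (Set.range fun z : ℍ => dist (g • z) z) := by
    refine ⟨0, ?_⟩
    rintro _ ⟨z, rfl⟩
    exact dist_nonneg
  refine le_antisymm ?_ (le_ciInf key)
  exact (ciInf_le hbdd z₀).trans hd0.le
end

section
/- Let r ≥ 1, let Γ be a subgroup of SL(2,ℝ), let ρ : Γ →* (Fin r → SL(2,ℝ)) be a group homomorphism, let L ≥ 0, and let f : ℍ → (Fin r → ℍ) be an L-Lipschitz ρ-equivariant map (for the hyperbolic metric on ℍ and the supremum metric on Fin r → ℍ). Let γ ∈ Γ be hyperbolic, i.e. |trace γ| > 2, with largest eigenvalue λ = (|tr γ| + √((tr γ)² − 4))/2. Then for every index i such that |trace (ρ(γ) i)| > 2, the largest eigenvalue λᵢ = (|tr (ρ(γ) i)| + √((tr (ρ(γ) i))² − 4))/2 satisfies Real.log λᵢ ≤ L · Real.log λ. -/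
open scoped UpperHalfPlane MatrixGroups
open Complex Real


lemma dist_formula (a b c d : ℝ) (hdet : a * d - b * c = 1) (z w : ℍ)
    (hcoe : (w : ℂ) = ((a:ℂ) * z + b) / ((c:ℂ) * z + d)) :
    dist z w = 2 * Real.arsinh (‖((c:ℂ) * (z:ℂ)^2
      + ((d:ℂ) - a) * (z:ℂ) - b)‖ / (2 * z.im)) := by
  have hcz : ((c:ℂ) * z + d) ≠ 0 := by
    have := UpperHalfPlane.linear_ne_zero (cd := ![c, d]) z ?_
    · simpa using this
    · intro h
      have hc : c = 0 := congrFun h 0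
      have hd : d = 0 := congrFun h 1
      simp [hc, hd] at hdet
  set N := Complex.normSq ((c:ℂ) * z + d) with hN
  have hNpos : 0 < N := Complex.normSq_pos.2 hcz
  have him : w.im = z.im / N := by
    have h1 : w.im = ((((a:ℂ) * z + b) / ((c:ℂ) * z + d))).im := by
      rw [← UpperHalfPlane.coe_im, hcoe]
    rw [h1, Complex.div_im]
    simp only [Complex.add_im, Complex.add_re, Complex.mul_im, Complex.mul_re,
      Complex.ofReal_re, Complex.ofReal_im, UpperHalfPlane.coe_re, UpperHalfPlane.coe_im]
    field_simp
    have hNinv : N * N⁻¹ = 1 := mul_inv_cancel₀ hNpos.ne'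
    linear_combination z.im * hdet + (a * z.im * d - z.im * c * b) * hNinv
  have habs : dist (z : ℂ) (w : ℂ) =
      ‖((c:ℂ) * (z:ℂ)^2 + ((d:ℂ) - a) * (z:ℂ) - b)‖ / Real.sqrt N := by
    rw [Complex.dist_eq, hcoe]
    rw [show (z:ℂ) - ((a:ℂ) * z + b) / ((c:ℂ) * z + d)
        = ((c:ℂ) * (z:ℂ)^2 + ((d:ℂ) - a) * (z:ℂ) - b) / ((c:ℂ) * z + d) by
      rw [eq_div_iff hcz, sub_mul, div_mul_cancel₀ _ hcz]; ring]
    rw [Complex.norm_div, Complex.norm_def, Complex.norm_def, hN]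
  have hsq : Real.sqrt (z.im * w.im) = z.im / Real.sqrt N := by
    rw [him, show z.im * (z.im / N) = (z.im / Real.sqrt N)^2 by
      rw [div_pow, Real.sq_sqrt hNpos.le]; ring]
    exact Real.sqrt_sq (by positivity)
  rw [UpperHalfPlane.dist_eq, habs, hsq]
  congr 1
  have hsN : Real.sqrt N ≠ 0 := by positivity
  congr 1
  field_simp



lemma arsinh_sqrt_eq_log (t : ℝ) (ht : 2 < |t|) :
    Real.arsinh (Real.sqrt (t ^ 2 - 4) / 2) = Real.log ((|t| + Real.sqrt (|t| ^ 2 - 4)) / 2) := by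
  have h4 : (0:ℝ) ≤ t ^ 2 - 4 := by nlinarith [_root_.sq_abs t]
  have habs : |t| ^ 2 - 4 = t ^ 2 - 4 := by rw [_root_.sq_abs]
  have h1 : 1 + (Real.sqrt (t ^ 2 - 4) / 2) ^ 2 = (|t| / 2) ^ 2 := by
    rw [div_pow, Real.sq_sqrt h4]; nlinarith [_root_.sq_abs t]
  rw [Real.arsinh, h1, Real.sqrt_sq (by positivity), habs]
  ring_nf

lemma q_lower_bound (a b c d : ℝ) (hdet : a * d - b * c = 1) (h4 : 4 ≤ (a + d) ^ 2) (z : ℍ) :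
    Real.sqrt ((a + d) ^ 2 - 4) * z.im ≤
      ‖((c:ℂ) * (z:ℂ) ^ 2 + ((d:ℂ) - a) * (z:ℂ) - b)‖ := by
  set x := z.re with hx
  set y := z.im with hy
  have hz : (z : ℂ) = (x : ℂ) + (y : ℂ) * I := by
    rw [hx, hy]; exact (Complex.re_add_im (z:ℂ)).symm
  have hq : (c:ℂ) * (z:ℂ) ^ 2 + ((d:ℂ) - a) * (z:ℂ) - b
      = ((c * (x^2 - y^2) + (d - a) * x - b : ℝ) : ℂ) + ((2*c*x*y + (d-a)*y : ℝ) : ℂ) * I := by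
    rw [hz]; push_cast; ring_nf; simp [Complex.I_sq]; ring
  rw [hq, Complex.norm_add_mul_I]
  have h1 : Real.sqrt ((a + d) ^ 2 - 4) * y = Real.sqrt (((a+d)^2 - 4) * y^2) := by
    rw [Real.sqrt_mul (by linarith), Real.sqrt_sq z.im_pos.le]
  rw [h1]
  apply Real.sqrt_le_sqrt
  nlinarith [sq_nonneg (c * (x^2 - y^2) + (d - a) * x - b + 2*c*y^2), z.im_pos]

lemma q_exists_point (a b c d : ℝ) (hdet : a * d - b * c = 1) (ht : 2 < |a + d|) :
    ∃ z : ℍ, ‖((c:ℂ) * (z:ℂ) ^ 2 + ((d:ℂ) - a) * (z:ℂ) - b)‖ ≤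
      Real.sqrt ((a + d) ^ 2 - 4) * z.im := by
  have h4 : (0:ℝ) < (a + d) ^ 2 - 4 := by nlinarith [_root_.sq_abs (a+d)]
  have hs : 0 < Real.sqrt ((a + d) ^ 2 - 4) := Real.sqrt_pos.2 h4
  have key : ∀ (x₀ y₀ : ℝ) (hy : 0 < y₀),
      (c * (x₀^2 - y₀^2) + (d - a) * x₀ - b + 2*c*y₀^2 = 0) →
      ‖((c:ℂ) * ((⟨⟨x₀,y₀⟩,hy⟩ : ℍ):ℂ) ^ 2 + ((d:ℂ) - a) * ((⟨⟨x₀,y₀⟩,hy⟩ : ℍ):ℂ) - b)‖ ≤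
      Real.sqrt ((a + d) ^ 2 - 4) * y₀ := by
    intro x₀ y₀ hy hcrit
    have hz : ((⟨⟨x₀,y₀⟩,hy⟩ : ℍ) : ℂ) = (x₀ : ℂ) + (y₀ : ℂ) * I := by
      simp [Complex.ext_iff]
    have hq : (c:ℂ) * ((x₀ : ℂ) + (y₀ : ℂ) * I) ^ 2 + ((d:ℂ) - a) * ((x₀ : ℂ) + (y₀ : ℂ) * I) - b
        = ((c * (x₀^2 - y₀^2) + (d - a) * x₀ - b : ℝ) : ℂ) + ((2*c*x₀*y₀ + (d-a)*y₀ : ℝ) : ℂ) * I := by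
      push_cast; ring_nf; simp [Complex.I_sq]; ring
    rw [hz, hq, Complex.norm_add_mul_I]
    have h1 : Real.sqrt ((a + d) ^ 2 - 4) * y₀ = Real.sqrt (((a+d)^2 - 4) * y₀^2) := by
      rw [Real.sqrt_mul h4.le, Real.sqrt_sq hy.le]
    rw [h1]
    apply Real.sqrt_le_sqrt
    nlinarith [hcrit, sq_nonneg (c * (x₀^2 - y₀^2) + (d - a) * x₀ - b + 2*c*y₀^2)]
  by_cases hc : c = 0
  · -- take x₀ = b/(d-a), y₀ = 1
    have hda : d - a ≠ 0 := by
      intro h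
      have : d = a := by linarith
      subst this
      have hd2 : d * d = 1 := by rw [hc] at hdet; linarith
      nlinarith [h4]
    refine ⟨⟨⟨b/(d-a), 1⟩, one_pos⟩, key _ 1 one_pos ?_⟩
    field_simp [hc]
    rw [hc]; ring
  · set x₀ := (a - d) / (2*c) with hx₀
    set y₀ := Real.sqrt ((a + d) ^ 2 - 4) / (2*|c|) with hy₀
    have hy : 0 < y₀ := by
      apply div_pos hs
      simp [abs_pos.2 hc]
    refine ⟨⟨⟨x₀, y₀⟩, hy⟩, key x₀ y₀ hy ?_⟩
    have hy2 : y₀^2 = ((a+d)^2 - 4) / (4*c^2) := by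
      rw [hy₀, div_pow, Real.sq_sqrt h4.le, mul_pow, _root_.sq_abs]
      norm_num
    rw [hx₀, hy2]
    field_simp
    ring_nf
    linear_combination 16 * hdet

-- SL2 entry facts
lemma sl2_facts (g : SL(2,ℝ)) :
    g 0 0 * g 1 1 - g 0 1 * g 1 0 = 1 ∧
    Matrix.trace ((g : SL(2,ℝ)) : Matrix (Fin 2) (Fin 2) ℝ) = g 0 0 + g 1 1 ∧
    ∀ z : ℍ, ((g • z : ℍ) : ℂ) = ((g 0 0 : ℝ) * z + (g 0 1 : ℝ)) / ((g 1 0 : ℝ) * z + (g 1 1 : ℝ)) := by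
  refine ⟨?_, Matrix.trace_fin_two _, fun z => ?_⟩
  · have := g.2; rw [Matrix.det_fin_two] at this; exact this
  · rw [UpperHalfPlane.specialLinearGroup_apply]; simp

lemma two_log_le_dist_smul (g : SL(2,ℝ)) (z : ℍ)
    (ht : 2 < |Matrix.trace ((g : SL(2,ℝ)) : Matrix (Fin 2) (Fin 2) ℝ)|) :
    2 * Real.log ((|Matrix.trace ((g : SL(2,ℝ)) : Matrix (Fin 2) (Fin 2) ℝ)| +
      Real.sqrt (|Matrix.trace ((g : SL(2,ℝ)) : Matrix (Fin 2) (Fin 2) ℝ)| ^ 2 - 4)) / 2)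
      ≤ dist z (g • z) := by
  obtain ⟨hdet, htr, hcoe⟩ := sl2_facts g
  set a := g 0 0; set b := g 0 1; set c := g 1 0; set d := g 1 1
  have hdet' : a * d - b * c = 1 := by linarith
  rw [htr] at ht ⊢
  rw [dist_formula a b c d hdet' z _ (hcoe z), ← arsinh_sqrt_eq_log _ ht]
  have h4 : 4 ≤ (a + d) ^ 2 := by nlinarith [_root_.sq_abs (a+d)]
  have := q_lower_bound a b c d hdet' h4 z
  have hy := z.im_pos
  gcongr 2 * ?_
  rw [Real.arsinh_le_arsinh]
  rw [div_le_div_iff₀ (by norm_num) (by positivity)]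
  nlinarith [this]

lemma exists_dist_smul_le (g : SL(2,ℝ))
    (ht : 2 < |Matrix.trace ((g : SL(2,ℝ)) : Matrix (Fin 2) (Fin 2) ℝ)|) :
    ∃ z : ℍ, dist z (g • z) ≤
      2 * Real.log ((|Matrix.trace ((g : SL(2,ℝ)) : Matrix (Fin 2) (Fin 2) ℝ)| +
      Real.sqrt (|Matrix.trace ((g : SL(2,ℝ)) : Matrix (Fin 2) (Fin 2) ℝ)| ^ 2 - 4)) / 2) := by
  obtain ⟨hdet, htr, hcoe⟩ := sl2_facts g
  set a := g 0 0; set b := g 0 1; set c := g 1 0; set d := g 1 1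
  have hdet' : a * d - b * c = 1 := by linarith
  rw [htr] at ht ⊢
  obtain ⟨z, hz⟩ := q_exists_point a b c d hdet' ht
  refine ⟨z, ?_⟩
  rw [dist_formula a b c d hdet' z _ (hcoe z), ← arsinh_sqrt_eq_log _ ht]
  have hy := z.im_pos
  gcongr 2 * ?_
  rw [Real.arsinh_le_arsinh]
  rw [div_le_div_iff₀ (by positivity) (by norm_num)]
  nlinarith [hz]


/-- Proposition 3.3 of the paper: if `f : ℍ → ℍ^r` is an `L`-Lipschitz
`ρ`-equivariant map and `γ` is hyperbolic with largest eigenvalue `λ`, then every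
hyperbolic factor `ρ(γ) i` with largest eigenvalue `λᵢ` satisfies
`log λᵢ ≤ L * log λ`. -/
theorem log_eigenvalue_le_of_equivariant_lipschitz
    (r : ℕ) (hr : 1 ≤ r)
    (Γ : Subgroup SL(2, ℝ))
    (ρ : Γ →* (Fin r → SL(2, ℝ))) (L : ℝ) (hL : 0 ≤ L)
    (f : ℍ → (Fin r → ℍ))
    (hfLip : ∀ z w : ℍ, dist (f z) (f w) ≤ L * dist z w)
    (hfequiv : ∀ γ : Γ, ∀ z : ℍ, ∀ i : Fin r,
      f ((γ : SL(2, ℝ)) • z) i = (ρ γ i) • (f z i))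
    (γ : Γ)
    (hγhyp : 2 < |Matrix.trace ((γ : SL(2, ℝ)) : Matrix (Fin 2) (Fin 2) ℝ)|)
    (lam : ℝ)
    (hlam : lam = (|Matrix.trace ((γ : SL(2, ℝ)) : Matrix (Fin 2) (Fin 2) ℝ)| +
      Real.sqrt (|Matrix.trace ((γ : SL(2, ℝ)) : Matrix (Fin 2) (Fin 2) ℝ)| ^ 2 - 4)) / 2) :
    ∀ i : Fin r, 2 < |Matrix.trace ((ρ γ i : SL(2, ℝ)) : Matrix (Fin 2) (Fin 2) ℝ)| →
      Real.log ((|Matrix.trace ((ρ γ i : SL(2, ℝ)) : Matrix (Fin 2) (Fin 2) ℝ)| +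
        Real.sqrt (|Matrix.trace ((ρ γ i : SL(2, ℝ)) : Matrix (Fin 2) (Fin 2) ℝ)| ^ 2 - 4)) / 2)
        ≤ L * Real.log lam := by
  intro i hi
  obtain ⟨z₀, hz₀⟩ := exists_dist_smul_le ((γ : SL(2, ℝ))) hγhyp
  have h1 := two_log_le_dist_smul (ρ γ i) (f z₀ i) hi
  rw [← hfequiv γ z₀ i] at h1
  have h2 : dist (f z₀ i) (f ((γ : SL(2, ℝ)) • z₀) i) ≤
      dist (f z₀) (f ((γ : SL(2, ℝ)) • z₀)) := dist_le_pi_dist _ _ i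
  have h3 := hfLip z₀ ((γ : SL(2, ℝ)) • z₀)
  have h4 : L * dist z₀ ((γ : SL(2, ℝ)) • z₀) ≤ L * (2 * Real.log lam) := by
    rw [hlam]
    exact mul_le_mul_of_nonneg_left hz₀ hL
  linarith
end

section
/- Let G be a group and let x, y, z, w ∈ G satisfy x² = y² = z² = 1, w³ = 1, and x·y·z·w = 1. Then the commutator ⁅x·y, z·x⁆ equals w, and the subgroup generated by {x, y, z, w} equals the subgroup generated by the two elements {x·y, z·x}. -/
open scoped commutatorElement

/-- The (0;2,2,2,3;0) group computation of Section 5: if `x, y, z` are involutions,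
`w` has order dividing three, and `x y z w = 1`, then `⁅xy, zx⁆ = w` and the group
generated by `x, y, z, w` is generated by the two elements `xy` and `zx`. -/
theorem two_generator_of_signature_0_2223
    {G : Type*} [Group G] (x y z w : G)
    (hx : x ^ 2 = 1) (hy : y ^ 2 = 1) (hz : z ^ 2 = 1) (hw : w ^ 3 = 1)
    (hrel : x * y * z * w = 1) :
    ⁅x * y, z * x⁆ = w ∧
      Subgroup.closure {x, y, z, w} = Subgroup.closure {x * y, z * x} := by
  have hxx : x * x = 1 := by rw [← sq]; exact hx
  have hx' : x⁻¹ = x := by rw [inv_eq_iff_mul_eq_one]; exact hxx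
  have hy' : y⁻¹ = y := by rw [inv_eq_iff_mul_eq_one, ← sq]; exact hy
  have hz' : z⁻¹ = z := by rw [inv_eq_iff_mul_eq_one, ← sq]; exact hz
  have hxyz : x * y * z = w⁻¹ := by rw [eq_inv_iff_mul_eq_one]; exact hrel
  have hwinv : w⁻¹ * w⁻¹ = w := by
    have h := hw
    have : w⁻¹ * w⁻¹ * w ^ 3 = w := by group
    rw [hw, mul_one] at this; exact this
  have hcomm : ⁅x * y, z * x⁆ = w := by
    rw [commutatorElement_def, mul_inv_rev, mul_inv_rev, hx', hy', hz']
    have e1 : x * y * (z * x) * (y * x) * (x * z) = x * y * z * (x * y * ((x * x) * z)) := by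
      group
    rw [e1, hxx, one_mul, show x * y * z * (x * y * z) = (x * y * z) * (x * y * z) from rfl,
      hxyz, hwinv]
  refine ⟨hcomm, le_antisymm ?_ ?_⟩
  · set H := Subgroup.closure {x * y, z * x} with hH
    have hA : x * y ∈ H := Subgroup.subset_closure (Set.mem_insert _ _)
    have hB : z * x ∈ H := Subgroup.subset_closure (Set.mem_insert_of_mem _ rfl)
    have hwH : w ∈ H := by
      rw [← hcomm, commutatorElement_def]
      exact mul_mem (mul_mem (mul_mem hA hB) (inv_mem hA)) (inv_mem hB)
    have hxH : x ∈ H := by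
      have hxeq : x = w * (x * y) * (z * x) := by
        rw [show w * (x * y) * (z * x) = w * (x * y * z) * x from by group, hxyz,
          mul_inv_cancel, one_mul]
      rw [hxeq]; exact mul_mem (mul_mem hwH hA) hB
    have hyH : y ∈ H := by
      have : y = x * (x * y) := by rw [← mul_assoc, hxx, one_mul]
      rw [this]; exact mul_mem hxH hA
    have hzH : z ∈ H := by
      have : z = (z * x) * x := by rw [mul_assoc, hxx, mul_one]
      rw [this]; exact mul_mem hB hxH
    rw [Subgroup.closure_le]
    intro g hg
    simp only [Set.mem_insert_iff, Set.mem_singleton_iff] at hg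
    rcases hg with rfl | rfl | rfl | rfl
    exacts [hxH, hyH, hzH, hwH]
  · set K := Subgroup.closure {x, y, z, w} with hK
    have hxK : x ∈ K := Subgroup.subset_closure (by simp)
    have hyK : y ∈ K := Subgroup.subset_closure (by simp)
    have hzK : z ∈ K := Subgroup.subset_closure (by simp)
    rw [Subgroup.closure_le]
    intro g hg
    simp only [Set.mem_insert_iff, Set.mem_singleton_iff] at hg
    rcases hg with rfl | rfl
    exacts [mul_mem hxK hyK, mul_mem hzK hxK]
end

section
/- For every natural number n ≥ 1, set ε = (2 + Real.sqrt 3)ⁿ. Then the intermediate field of ℝ over ℚ generated by the two real numbers 4 + ε² and (4 + ε²)·(1 + ε⁻²) equals the intermediate field generated by Real.sqrt 3; that is, IntermediateField.adjoin ℚ ({4 + ε², (4 + ε²)·(1 + ε⁻²)} : Set ℝ) = IntermediateField.adjoin ℚ ({Real.sqrt 3} : Set ℝ). -/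
lemma pow_repr (m : ℕ) (hm : 1 ≤ m) :
    ∃ a b : ℚ, 0 < a ∧ 0 < b ∧ (2 + Real.sqrt 3) ^ m = a + b * Real.sqrt 3 ∧
      a ^ 2 - 3 * b ^ 2 = 1 := by
  have h3 : Real.sqrt 3 * Real.sqrt 3 = 3 := Real.mul_self_sqrt (by norm_num)
  induction m, hm using Nat.le_induction with
  | base => exact ⟨2, 1, by norm_num, by norm_num, by push_cast; ring, by norm_num⟩
  | succ m hm ih =>
    obtain ⟨a, b, ha, hb, heq, hnorm⟩ := ih
    refine ⟨2 * a + 3 * b, a + 2 * b, by linarith, by linarith, ?_, by nlinarith⟩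
    rw [pow_succ, heq]
    push_cast
    linear_combination (b:ℝ) * h3

/-- Identification of the invariant trace field of the groups `Γₙ` of Section 5:
for `ε = (2 + √3)ⁿ`, the field `ℚ(4 + ε², (4 + ε²)(1 + ε⁻²))` equals `ℚ(√3)`. -/
theorem invariant_trace_field_eq_Q_sqrt3 (n : ℕ) (hn : 1 ≤ n) :
    IntermediateField.adjoin ℚ
        ({4 + ((2 + Real.sqrt 3) ^ n) ^ 2,
          (4 + ((2 + Real.sqrt 3) ^ n) ^ 2) * (1 + (((2 + Real.sqrt 3) ^ n) ^ 2)⁻¹)} : Set ℝ)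
      = IntermediateField.adjoin ℚ ({Real.sqrt 3} : Set ℝ) := by
  have h3nn : (0:ℝ) ≤ 3 := by norm_num
  have h3 : Real.sqrt 3 * Real.sqrt 3 = 3 := Real.mul_self_sqrt h3nn
  have hs3pos : 0 < Real.sqrt 3 := Real.sqrt_pos.2 (by norm_num)
  set ε : ℝ := (2 + Real.sqrt 3) ^ n with hε
  have hεpos : 0 < ε := pow_pos (by linarith) n
  have hg1pos : (0:ℝ) < 4 + ε ^ 2 := by positivity
  apply le_antisymm
  · rw [IntermediateField.adjoin_le_iff]
    set F := IntermediateField.adjoin ℚ ({Real.sqrt 3} : Set ℝ) with hF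
    have hs3 : Real.sqrt 3 ∈ F := IntermediateField.subset_adjoin ℚ _ rfl
    have h2 : (2:ℝ) ∈ F := by simpa using F.algebraMap_mem (2:ℚ)
    have h4 : (4:ℝ) ∈ F := by simpa using F.algebraMap_mem (4:ℚ)
    have h1 : (1:ℝ) ∈ F := F.one_mem
    have hεm : ε ∈ F := pow_mem (add_mem h2 hs3) n
    have hε2 : ε ^ 2 ∈ F := pow_mem hεm 2
    have hg1 : 4 + ε ^ 2 ∈ F := add_mem h4 hε2
    intro x hx
    rcases hx with rfl | hx
    · exact hg1
    · rcases hx with rfl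
      exact mul_mem hg1 (add_mem h1 (inv_mem hε2))
  · rw [IntermediateField.adjoin_le_iff]
    set F := IntermediateField.adjoin ℚ
        ({4 + ε ^ 2, (4 + ε ^ 2) * (1 + (ε ^ 2)⁻¹)} : Set ℝ) with hF
    have hg1 : 4 + ε ^ 2 ∈ F := IntermediateField.subset_adjoin ℚ _ (Or.inl rfl)
    have hg2 : (4 + ε ^ 2) * (1 + (ε ^ 2)⁻¹) ∈ F :=
      IntermediateField.subset_adjoin ℚ _ (Or.inr rfl)
    have h4 : (4:ℝ) ∈ F := by simpa using F.algebraMap_mem (4:ℚ)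
    have hε2 : ε ^ 2 ∈ F := by
      have := sub_mem hg1 h4; simpa using this
    have hinv : (ε ^ 2)⁻¹ ∈ F := by
      have hmem : (4 + ε ^ 2) * (1 + (ε ^ 2)⁻¹) * (4 + ε ^ 2)⁻¹ - 1 ∈ F :=
        sub_mem (mul_mem hg2 (inv_mem hg1)) F.one_mem
      have : (4 + ε ^ 2) * (1 + (ε ^ 2)⁻¹) * (4 + ε ^ 2)⁻¹ - 1 = (ε ^ 2)⁻¹ := by
        field_simp; ring
      rwa [this] at hmem
    obtain ⟨a, b, ha, hb, heq, hnorm⟩ := pow_repr (2 * n) (by omega)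
    have hε2eq : ε ^ 2 = (a:ℝ) + b * Real.sqrt 3 := by
      rw [hε, ← pow_mul, mul_comm]; exact heq
    have hinveq : (ε ^ 2)⁻¹ = (a:ℝ) - b * Real.sqrt 3 := by
      have hmul : (ε ^ 2) * ((a:ℝ) - b * Real.sqrt 3) = 1 := by
        rw [hε2eq]
        have : ((a:ℝ) + b * Real.sqrt 3) * ((a:ℝ) - b * Real.sqrt 3)
            = (a:ℝ)^2 - 3 * b^2 := by nlinarith [h3]
        rw [this]
        exact_mod_cast congrArg (Rat.cast : ℚ → ℝ) hnorm
      field_simp at hmul ⊢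
      linarith [hmul]
    have hkey : Real.sqrt 3 = ((2 * b : ℚ):ℝ)⁻¹ * (ε ^ 2 - (ε ^ 2)⁻¹) := by
      rw [hinveq, hε2eq]
      have hbne : ((2 * b : ℚ):ℝ) ≠ 0 := by
        exact_mod_cast (by positivity : (2 * b : ℚ) ≠ 0)
      field_simp
      push_cast
      ring
    intro x hx
    rcases hx with rfl
    rw [hkey]
    exact mul_mem (inv_mem (by simpa using F.algebraMap_mem (2 * b))) (sub_mem hε2 hinv)
end

section
/- Let K be the subfield ℚ(√3) of ℝ (the intermediate field IntermediateField.adjoin ℚ {√3}, a field), let n ≥ 1 and let ε = (2 + √3)ⁿ regarded as an element of K. Then the quaternion algebra ℍ[K, 4 + ε², −(1 + ε²)] over K is isomorphic as a K-algebra to the 2×2 matrix algebra: Nonempty (ℍ[K, 4 + ε², −(1 + ε²)] ≃ₐ[K] Matrix (Fin 2) (Fin 2) K). -/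
open scoped Quaternion

set_option maxHeartbeats 1000000 in
set_option synthInstance.maxHeartbeats 1000000 in
/-- The invariant quaternion algebra of the groups `Γₙ` of Section 5 splits:
for `K = ℚ(√3)` and `ε = (2 + √3)ⁿ ∈ K`, the quaternion algebra
`(4 + ε², −(1 + ε²) / K)` is isomorphic to `M(2, K)`. -/
theorem quaternion_algebra_splits (n : ℕ) (hn : 1 ≤ n)
    (K : IntermediateField ℚ ℝ)
    (hK : K = IntermediateField.adjoin ℚ ({Real.sqrt 3} : Set ℝ))
    (ε : K) (hε : (ε : ℝ) = (2 + Real.sqrt 3) ^ n) :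
    Nonempty (ℍ[K, 4 + ε ^ 2, -(1 + ε ^ 2)] ≃ₐ[K] Matrix (Fin 2) (Fin 2) K) := by
  have hs3 : Real.sqrt 3 ∈ K := by
    rw [hK]; exact IntermediateField.subset_adjoin _ _ rfl
  set a : K := 4 + ε ^ 2 with ha
  set b : K := -(1 + ε ^ 2) with hb
  set s : K := ⟨Real.sqrt 3, hs3⟩ with hs
  have hs2 : s ^ 2 = 3 := by
    apply Subtype.ext
    push_cast [hs]
    rw [Real.sq_sqrt (by norm_num : (3:ℝ) ≥ 0)]
    norm_cast
  have h4 : ((4:K):ℝ) = 4 := by norm_cast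
  have hεsq : (0:ℝ) ≤ (ε:ℝ) ^ 2 := sq_nonneg _
  have ha0 : a ≠ 0 := by
    intro h
    have : ((a:K):ℝ) = 0 := by rw [h]; norm_num
    push_cast [ha] at this
    nlinarith
  have ha3 : a - 3 ≠ 0 := by
    intro h
    have : ((a - 3 : K):ℝ) = 0 := by rw [h]; norm_num
    push_cast [ha] at this
    nlinarith
  -- quaternionic basis of matrices
  set I : Matrix (Fin 2) (Fin 2) K := !![0, 1; a, 0] with hI
  set J : Matrix (Fin 2) (Fin 2) K := !![s, 1; -a, -s] with hJ
  have hone : (1 : Matrix (Fin 2) (Fin 2) K) = !![1, 0; 0, 1] := by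
    ext i j; fin_cases i <;> fin_cases j <;> simp
  have hIJ : I * J = !![-a, -s; a * s, a] := by
    rw [hI, hJ]
    ext i j; fin_cases i <;> fin_cases j <;>
      simp [Matrix.mul_apply, Fin.sum_univ_succ] <;> ring
  let Q : QuaternionAlgebra.Basis (Matrix (Fin 2) (Fin 2) K) a 0 b :=
    { i := I
      j := J
      k := I * J
      i_mul_i := by
        rw [hI, hone]
        ext i j; fin_cases i <;> fin_cases j <;>
          simp [Matrix.mul_apply, Fin.sum_univ_succ]
      j_mul_j := by
        rw [hJ, hone]
        ext i j; fin_cases i <;> fin_cases j <;>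
          simp [Matrix.mul_apply, Fin.sum_univ_succ] <;>
        · push_cast [ha, hb, h4]
          have hs2' := congrArg (fun x : K => (x:ℝ)) hs2
          push_cast at hs2'
          have h3 : ((3:K):ℝ) = 3 := by norm_cast
          linarith [hs2', h3]
      i_mul_j := rfl
      j_mul_i := by
        rw [hIJ, hI, hJ]
        ext i j; fin_cases i <;> fin_cases j <;>
          simp [Matrix.mul_apply, Fin.sum_univ_succ] <;> ring }
  let φ : ℍ[K, a, b] →ₐ[K] Matrix (Fin 2) (Fin 2) K := Q.liftHom
  have hinj : Function.Injective φ := by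
    rw [injective_iff_map_eq_zero]
    intro q hq
    have hq' : algebraMap K (Matrix (Fin 2) (Fin 2) K) q.re + q.imI • I + q.imJ • J
        + q.imK • (I * J) = 0 := hq
    rw [hI, hJ, hIJ] at hq'
    have e00 := congrFun (congrFun hq' 0) 0
    have e01 := congrFun (congrFun hq' 0) 1
    have e10 := congrFun (congrFun hq' 1) 0
    have e11 := congrFun (congrFun hq' 1) 1
    simp [Matrix.algebraMap_eq_diagonal, Matrix.diagonal_apply] at e00 e01 e10 e11
    have hImI : q.imI = 0 := by
      have h1 : a * (q.imI - q.imJ + q.imK * s) = 0 := by linear_combination e10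
      have h2 : q.imI - q.imJ + q.imK * s = 0 :=
        (mul_eq_zero.mp h1).resolve_left ha0
      linear_combination (e01 + h2) / 2
    have hImK : q.imK = 0 := by
      have h3 : (a - 3) * q.imK = 0 := by
        linear_combination (e11 - e00) / 2 + s * e01 - s * hImI + q.imK * hs2
      exact (mul_eq_zero.mp h3).resolve_left ha3
    have hImJ : q.imJ = 0 := by linear_combination e01 - hImI + s * hImK
    have hre : q.re = 0 := by linear_combination (e00 + e11) / 2
    ext <;> simp [hre, hImI, hImJ, hImK]
  have hdim : Module.finrank K ℍ[K, a, b] = Module.finrank K (Matrix (Fin 2) (Fin 2) K) := by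
    rw [QuaternionAlgebra.finrank_eq_four, Module.finrank_matrix]
    simp
  have hsurj : Function.Surjective φ :=
    (LinearMap.injective_iff_surjective_of_finrank_eq_finrank (f := φ.toLinearMap) hdim).mp hinj
  exact ⟨AlgEquiv.ofBijective φ ⟨hinj, hsurj⟩⟩
end

section
/- For every natural number n ≥ 1, the real number Real.sqrt (1 + (2 + Real.sqrt 3)^(2n)) does not belong to the subfield ℚ(√3) of ℝ (the intermediate field IntermediateField.adjoin ℚ {Real.sqrt 3}); equivalently, 1 + ε² is not the square of an element of ℚ(√3), where ε = (2+√3)ⁿ. -/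
lemma irr_sqrt3 : Irrational (Real.sqrt 3) := by
  have := (Nat.prime_three).irrational_sqrt
  simpa using this

/-- If `r + s√3 = 0` with `r s : ℚ`, then `r = 0` and `s = 0`. -/
lemma rat_sqrt3_eq_zero (r s : ℚ) (h : (r : ℝ) + (s : ℝ) * Real.sqrt 3 = 0) :
    r = 0 ∧ s = 0 := by
  by_cases hs : s = 0
  · subst hs
    simp at h
    exact ⟨by exact_mod_cast h, rfl⟩
  · exfalso
    apply irr_sqrt3
    refine ⟨-r / s, ?_⟩
    have hs' : (s : ℝ) ≠ 0 := by exact_mod_cast hs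
    push_cast
    field_simp
    linarith

/-- The explicit subfield `{a + b√3 : a b ∈ ℚ}` as an intermediate field of `ℝ/ℚ`. -/
noncomputable def sqrt3Field : IntermediateField ℚ ℝ where
  carrier := {x | ∃ a b : ℚ, x = (a : ℝ) + (b : ℝ) * Real.sqrt 3}
  zero_mem' := ⟨0, 0, by norm_num⟩
  one_mem' := ⟨1, 0, by norm_num⟩
  add_mem' := by
    rintro x y ⟨a, b, rfl⟩ ⟨c, d, rfl⟩
    exact ⟨a + c, b + d, by push_cast; ring⟩
  mul_mem' := by
    rintro x y ⟨a, b, rfl⟩ ⟨c, d, rfl⟩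
    have h3 : Real.sqrt 3 * Real.sqrt 3 = 3 := Real.mul_self_sqrt (by norm_num)
    exact ⟨a * c + 3 * b * d, a * d + b * c, by push_cast; linear_combination (b : ℝ) * d * h3⟩
  algebraMap_mem' := fun q => ⟨q, 0, by norm_num⟩
  inv_mem' := by
    rintro x ⟨a, b, rfl⟩
    have h3 : Real.sqrt 3 * Real.sqrt 3 = 3 := Real.mul_self_sqrt (by norm_num)
    by_cases hx : (a : ℝ) + (b : ℝ) * Real.sqrt 3 = 0
    · rw [hx]
      exact ⟨0, 0, by norm_num⟩
    · have hD : a ^ 2 - 3 * b ^ 2 ≠ 0 := by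
        intro hD
        by_cases hb : b = 0
        · subst hb
          simp at hD
          apply hx
          rw [hD]
          norm_num
        · apply irr_sqrt3
          refine ⟨a / b, ?_⟩
          have hb' : (b : ℝ) ≠ 0 := by exact_mod_cast hb
          have ha2 : (a : ℝ) ^ 2 = 3 * (b : ℝ) ^ 2 := by
            have hq2 : (a : ℚ) ^ 2 = 3 * b ^ 2 := by linarith
            exact_mod_cast hq2
          -- a = b√3 or a = -b√3;  if a = -b√3 then x = 0
          have hfac : ((a : ℝ) - b * Real.sqrt 3) * ((a : ℝ) + b * Real.sqrt 3) = 0 := by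
            linear_combination ha2 - (b : ℝ) ^ 2 * h3
          rcases mul_eq_zero.mp hfac with h | h
          · push_cast
            field_simp
            linarith
          · exact absurd h hx
      refine ⟨a / (a ^ 2 - 3 * b ^ 2), -b / (a ^ 2 - 3 * b ^ 2), ?_⟩
      have hD' : ((a : ℝ) ^ 2 - 3 * (b : ℝ) ^ 2) ≠ 0 := by exact_mod_cast hD
      have hprod : ((a : ℝ) + (b : ℝ) * Real.sqrt 3) *
          (((a / (a ^ 2 - 3 * b ^ 2) : ℚ) : ℝ) + ((-b / (a ^ 2 - 3 * b ^ 2) : ℚ) : ℝ) * Real.sqrt 3) = 1 := by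
        push_cast
        field_simp
        rw [div_eq_iff (by contrapose! hD'; linear_combination hD'), one_mul]
        linear_combination (-(b : ℝ) ^ 2) * h3
      exact (eq_inv_of_mul_eq_one_right hprod).symm

lemma mem_sqrt3Field {x : ℝ} :
    x ∈ sqrt3Field ↔ ∃ a b : ℚ, x = (a : ℝ) + (b : ℝ) * Real.sqrt 3 := Iff.rfl

/-- Pell-type structure of powers of `2 + √3`. -/
lemma pell_pow (n : ℕ) (hn : 1 ≤ n) :
    ∃ p q : ℤ, 2 ≤ p ∧ 1 ≤ q ∧ p ^ 2 - 3 * q ^ 2 = 1 ∧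
      (2 + Real.sqrt 3) ^ n = (p : ℝ) + (q : ℝ) * Real.sqrt 3 := by
  have h3 : Real.sqrt 3 * Real.sqrt 3 = 3 := Real.mul_self_sqrt (by norm_num)
  induction n, hn using Nat.le_induction with
  | base => exact ⟨2, 1, le_refl _, le_refl _, by norm_num, by push_cast; ring⟩
  | succ n hn ih =>
    obtain ⟨p, q, hp, hq, hpq, heq⟩ := ih
    refine ⟨2 * p + 3 * q, p + 2 * q, by linarith, by linarith,
      by linear_combination hpq, ?_⟩
    rw [pow_succ, heq]
    push_cast
    linear_combination (q : ℝ) * h3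

/-- A rational whose square is an integer is an integer. -/
lemma rat_sq_int (a : ℚ) (m : ℤ) (h : a ^ 2 = (m : ℚ)) : ∃ c : ℤ, (c : ℚ) = a := by
  have hint : IsIntegral ℤ a := by
    refine ⟨Polynomial.X ^ 2 - Polynomial.C m, ?_, ?_⟩
    · exact Polynomial.monic_X_pow_sub_C m (by norm_num)
    · rw [Polynomial.eval₂_sub, Polynomial.eval₂_pow, Polynomial.eval₂_X, Polynomial.eval₂_C]
      simp [h]
  exact IsIntegrallyClosed.isIntegral_iff.mp hint

/-- No integer square equals `p(p+1)` or `p(p-1)` for `p ≥ 2`. -/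
lemma no_sq_between (p c : ℤ) (hp : 2 ≤ p) :
    c ^ 2 ≠ p ^ 2 + p ∧ c ^ 2 ≠ p ^ 2 - p := by
  have habs : |c| ^ 2 = c ^ 2 := sq_abs c
  have h0 : 0 ≤ |c| := abs_nonneg c
  constructor
  · intro h
    rcases le_or_gt |c| p with hle | hlt
    · nlinarith
    · nlinarith
  · intro h
    rcases le_or_gt |c| (p - 1) with hle | hlt
    · nlinarith
    · nlinarith

/-- For `ε = (2 + √3)ⁿ` with `n ≥ 1`, the real number `√(1 + ε²)` does not lie in
`ℚ(√3)`; equivalently, `1 + ε²` is not a square in `ℚ(√3)`. -/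
theorem sqrt_one_add_eps_sq_not_mem (n : ℕ) (hn : 1 ≤ n) :
    Real.sqrt (1 + (2 + Real.sqrt 3) ^ (2 * n)) ∉
      IntermediateField.adjoin ℚ ({Real.sqrt 3} : Set ℝ) := by
  intro hmem
  have h3 : Real.sqrt 3 * Real.sqrt 3 = 3 := Real.mul_self_sqrt (by norm_num)
  have hle : IntermediateField.adjoin ℚ ({Real.sqrt 3} : Set ℝ) ≤ sqrt3Field := by
    rw [IntermediateField.adjoin_le_iff]
    rintro x rfl
    exact mem_sqrt3Field.mpr ⟨0, 1, by norm_num⟩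
  obtain ⟨a, b, hab⟩ := mem_sqrt3Field.mp (hle hmem)
  obtain ⟨p, q, hp, hq, hpq, heq⟩ := pell_pow n hn
  -- square the defining equation
  have hsqrt3nn : (0 : ℝ) ≤ Real.sqrt 3 := Real.sqrt_nonneg 3
  have hargnn : (0 : ℝ) ≤ 1 + (2 + Real.sqrt 3) ^ (2 * n) := by positivity
  have hsq : Real.sqrt (1 + (2 + Real.sqrt 3) ^ (2 * n)) ^ 2
      = 1 + (2 + Real.sqrt 3) ^ (2 * n) := Real.sq_sqrt hargnn
  rw [hab] at hsq
  have hpow : (2 + Real.sqrt 3) ^ (2 * n) = ((2 + Real.sqrt 3) ^ n) ^ 2 := by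
    rw [← pow_mul, Nat.mul_comm]
  rw [hpow, heq] at hsq
  -- extract rational equations
  have hkey : ((a ^ 2 + 3 * b ^ 2 - 1 - (p : ℚ) ^ 2 - 3 * (q : ℚ) ^ 2 : ℚ) : ℝ)
      + ((2 * a * b - 2 * (p : ℚ) * (q : ℚ) : ℚ) : ℝ) * Real.sqrt 3 = 0 := by
    have h3' : Real.sqrt 3 ^ 2 = 3 := Real.sq_sqrt (by norm_num)
    push_cast
    linear_combination hsq - ((b : ℝ) ^ 2 - (q : ℝ) ^ 2) * h3'
  obtain ⟨h1, h2⟩ := rat_sqrt3_eq_zero _ _ hkey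
  have e1 : (a : ℚ) ^ 2 + 3 * b ^ 2 = 1 + (p : ℚ) ^ 2 + 3 * (q : ℚ) ^ 2 := by linarith [sub_eq_zero.mp h1]
  have e2 : (a : ℚ) * b = (p : ℚ) * q := by linarith [sub_eq_zero.mp h2]
  have e3 : (p : ℚ) ^ 2 - 3 * (q : ℚ) ^ 2 = 1 := by exact_mod_cast hpq
  -- the crucial identity
  have key : ((a : ℚ) ^ 2 - (p : ℚ) ^ 2) ^ 2 = (p : ℚ) ^ 2 := by
    linear_combination (a : ℚ) ^ 2 * e1 - 3 * ((a : ℚ) * b + (p : ℚ) * q) * e2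
      + ((p : ℚ) ^ 2 - (a : ℚ) ^ 2) * e3
  have hcases : (a : ℚ) ^ 2 = (p : ℚ) ^ 2 + p ∨ (a : ℚ) ^ 2 = (p : ℚ) ^ 2 - p := by
    have : ((a : ℚ) ^ 2 - (p : ℚ) ^ 2 - p) * ((a : ℚ) ^ 2 - (p : ℚ) ^ 2 + p) = 0 := by
      linear_combination key
    rcases mul_eq_zero.mp this with h | h
    · left; linarith
    · right; linarith
  rcases hcases with hcase | hcase
  · obtain ⟨c, hc⟩ := rat_sq_int a (p ^ 2 + p) (by push_cast; linarith)
    have hc2 : c ^ 2 = p ^ 2 + p := by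
      have : ((c : ℚ)) ^ 2 = ((p ^ 2 + p : ℤ) : ℚ) := by rw [hc]; push_cast; linarith
      exact_mod_cast this
    exact (no_sq_between p c hp).1 hc2
  · obtain ⟨c, hc⟩ := rat_sq_int a (p ^ 2 - p) (by push_cast; linarith)
    have hc2 : c ^ 2 = p ^ 2 - p := by
      have : ((c : ℚ)) ^ 2 = ((p ^ 2 - p : ℤ) : ℚ) := by rw [hc]; push_cast; linarith
      exact_mod_cast this
    exact (no_sq_between p c hp).2 hc2
end

section
/- For a natural number n ≥ 1, set ε = (2 + Real.sqrt 3)ⁿ, τ = 1 + 2ε⁻² + 2ε⁻¹·Real.sqrt (1 + ε⁻²), and ω = 1 + 2ε² + 2ε·Real.sqrt (1 + ε²). Then τ is an algebraic integer (integral over ℤ), its minimal polynomial over ℚ has degree 4, and the set of complex roots of this minimal polynomial is exactly {τ, τ⁻¹, ω, ω⁻¹}. In particular every complex root has absolute value at most ω, i.e. ω is the house of τ. -/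
open Polynomial

namespace TauHouseAux

noncomputable def s : ℝ := Real.sqrt 3

lemma hs2 : s ^ 2 = 3 := Real.sq_sqrt (by norm_num)

lemma s_irr : Irrational s := by
  have := (Nat.prime_three).irrational_sqrt
  simpa [s] using this

lemma s_pos : 0 < s := Real.sqrt_pos.mpr (by norm_num)

/-- coefficients of (2+√3)^n -/
def cd : ℕ → ℤ × ℤ
  | 0 => (1, 0)
  | n+1 => (2 * (cd n).1 + 3 * (cd n).2, (cd n).1 + 2 * (cd n).2)

def cc (n : ℕ) : ℤ := (cd n).1
def dd (n : ℕ) : ℤ := (cd n).2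

lemma cd_succ (n : ℕ) : cc (n+1) = 2 * cc n + 3 * dd n ∧ dd (n+1) = cc n + 2 * dd n := by
  constructor <;> rfl

lemma pow_eq (n : ℕ) : (2 + s) ^ n = (cc n : ℝ) + (dd n : ℝ) * s := by
  induction n with
  | zero => simp [cc, dd, cd]
  | succ n ih =>
    obtain ⟨h1, h2⟩ := cd_succ n
    rw [pow_succ, ih, h1, h2]
    push_cast
    linear_combination ((dd n : ℝ)) * hs2

lemma pell (n : ℕ) : cc n ^ 2 - 3 * dd n ^ 2 = 1 := by
  induction n with
  | zero => simp [cc, dd, cd]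
  | succ n ih =>
    obtain ⟨h1, h2⟩ := cd_succ n
    rw [h1, h2]; ring_nf; ring_nf at ih; linarith

lemma cc_pos (n : ℕ) : 1 ≤ cc n ∧ 0 ≤ dd n := by
  induction n with
  | zero => simp [cc, dd, cd]
  | succ n ih =>
    obtain ⟨h1, h2⟩ := cd_succ n
    constructor
    · rw [h1]; omega
    · rw [h2]; omega

lemma dd_pos (n : ℕ) (hn : 1 ≤ n) : 1 ≤ dd n := by
  obtain ⟨m, rfl⟩ := Nat.exists_eq_add_of_le hn
  have := cc_pos m
  have := (cd_succ m).2
  have : dd (1 + m) = dd (m + 1) := by rw [Nat.add_comm]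
  omega

lemma mod4 (n : ℕ) :
    (Even n → (cc n % 4 = 1 ∨ cc n % 4 = 3) ∧ dd n % 4 = 0) ∧
    (¬ Even n → cc n % 4 = 2 ∧ (dd n % 4 = 1 ∨ dd n % 4 = 3)) := by
  induction n with
  | zero => simp [cc, dd, cd]
  | succ n ih =>
    obtain ⟨h1, h2⟩ := cd_succ n
    rw [Nat.even_add_one]
    obtain ⟨ihe, iho⟩ := ih
    by_cases h : Even n
    · obtain ⟨hc, hd⟩ := ihe h
      constructor
      · intro h'; exact absurd h h'
      · intro _; omega
    · obtain ⟨hc, hd⟩ := iho h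
      constructor
      · intro _; omega
      · intro h'; exact absurd (not_not.mp h') h

lemma L1 (p q : ℚ) (h : (p : ℝ) + (q : ℝ) * s = 0) : p = 0 ∧ q = 0 := by
  by_cases hq : q = 0
  · subst hq; simp at h; exact ⟨by exact_mod_cast h, rfl⟩
  · exfalso
    have hq' : (q:ℝ) ≠ 0 := by exact_mod_cast hq
    have : s = ((-p / q : ℚ) : ℝ) := by
      push_cast
      field_simp
      linarith
    exact s_irr ⟨-p / q, this.symm⟩

lemma rat_sq_int (u : ℚ) (k : ℤ) (h : u ^ 2 = (k : ℚ)) : ∃ m : ℤ, m ^ 2 = k := by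
  by_contra hc
  push_neg at hc
  have hxr : ((u : ℝ)) ^ 2 = (k : ℤ) := by exact_mod_cast h
  have := irrational_nrt_of_notint_nrt 2 k hxr (by
    rintro ⟨y, hy⟩
    exact hc y (by
      have hu : u = (y : ℚ) := by exact_mod_cast hy
      rw [hu] at h
      have : (y:ℚ)^2 = (k:ℚ) := h ▸ rfl
      exact_mod_cast this)) (by norm_num)
  exact (Rat.not_irrational u) this

lemma no_sq_two (K : ℤ) (hK : K % 4 = 2) (m : ℤ) : m ^ 2 ≠ K := by
  intro h
  rcases Int.even_or_odd m with ⟨t, rfl⟩ | ⟨t, rfl⟩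
  · have : K = 4 * t ^ 2 := by rw [← h]; ring
    omega
  · have : K = 4 * (t ^ 2 + t) + 1 := by rw [← h]; ring
    omega

/-- `(u+vs)^2 = K` with `u v : ℚ`, `K : ℤ` gives rational constraints. -/
lemma ratsq (u v : ℚ) (K : ℤ) (h : ((u : ℝ) + (v : ℝ) * s) ^ 2 = (K : ℝ)) :
    u * v = 0 ∧ u ^ 2 + 3 * v ^ 2 = K := by
  have h0 : ((u ^ 2 + 3 * v ^ 2 - K : ℚ) : ℝ) + ((2 * (u * v) : ℚ) : ℝ) * s = 0 := by
    push_cast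
    linear_combination h - (v : ℝ) ^ 2 * hs2
  obtain ⟨h1, h2⟩ := L1 _ _ h0
  constructor
  · have : (2 : ℚ) * (u * v) = 0 := h2
    linarith
  · have : u ^ 2 + 3 * v ^ 2 - K = 0 := h1
    linarith

/-- key irrationality: √(1+ε²) ∉ ℚ(√3) -/
lemma A_irr (n : ℕ) (hn : 1 ≤ n) (p q : ℚ) :
    Real.sqrt (1 + ((2 + s) ^ n) ^ 2) ≠ (p : ℝ) + (q : ℝ) * s := by
  intro hA
  set ε : ℝ := (2 + s) ^ n with hε
  have hε_nonneg : 0 ≤ 1 + ε ^ 2 := by positivity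
  have hA2 : ((p : ℝ) + (q : ℝ) * s) ^ 2 = 1 + ε ^ 2 := by
    rw [← hA]; exact Real.sq_sqrt hε_nonneg
  have hpe : ε = (cc n : ℝ) + (dd n : ℝ) * s := pow_eq n
  have hpell : ((cc n : ℝ)) ^ 2 - 3 * (dd n : ℝ) ^ 2 = 1 := by exact_mod_cast pell n
  have h1 : ((p : ℝ) + (q : ℝ) * s) ^ 2 = 2 * (cc n : ℝ) * ε := by
    rw [hA2, hpe]
    linear_combination ((dd n : ℝ))^2 * hs2 - hpell
  rcases Nat.even_or_odd n with ⟨m, hm⟩ | ⟨m, hm⟩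
  · have hKodd : cc n % 4 = 1 ∨ cc n % 4 = 3 := ((mod4 n).1 ⟨m, hm⟩).1
    have hγ : ε = ((cc m : ℝ) + (dd m : ℝ) * s) ^ 2 := by
      rw [hε, hm, ← pow_eq m, pow_add]
      ring
    have hpm : ((cc m : ℝ)) ^ 2 - 3 * (dd m : ℝ) ^ 2 = 1 := by exact_mod_cast pell m
    have h4 : ((cc m : ℝ) + (dd m : ℝ) * s) * ((cc m : ℝ) - (dd m : ℝ) * s) = 1 := by
      linear_combination (-(dd m : ℝ)^2) * hs2 + hpm
    set u : ℚ := p * (cc m) - 3 * q * (dd m) with hu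
    set v : ℚ := q * (cc m) - p * (dd m) with hv
    have hid : ((u : ℝ) + (v : ℝ) * s)
        = ((p : ℝ) + (q : ℝ) * s) * ((cc m : ℝ) - (dd m : ℝ) * s) := by
      push_cast [hu, hv]
      linear_combination (q * (dd m : ℝ)) * hs2
    have hsq : ((u : ℝ) + (v : ℝ) * s) ^ 2 = ((2 * cc n : ℤ) : ℝ) := by
      rw [hid]
      push_cast
      rw [hγ] at h1
      linear_combination ((cc m : ℝ) - (dd m : ℝ) * s)^2 * h1
        + (2 * (cc n : ℝ) * (((cc m:ℝ)+(dd m :ℝ)*s)*((cc m:ℝ)-(dd m:ℝ)*s) + 1)) * h4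
    obtain ⟨huv, hval⟩ := ratsq u v _ hsq
    rcases mul_eq_zero.mp huv with hu0 | hv0
    · have : (3*v) ^ 2 = ((6 * cc n : ℤ) : ℚ) := by
        rw [hu0] at hval; push_cast at hval ⊢; linear_combination 3 * hval
      obtain ⟨m', hm'⟩ := rat_sq_int _ _ this
      exact no_sq_two _ (by omega) m' hm'
    · have : u ^ 2 = ((2 * cc n : ℤ) : ℚ) := by
        rw [hv0] at hval; push_cast at hval ⊢; linear_combination hval
      obtain ⟨m', hm'⟩ := rat_sq_int _ _ this
      exact no_sq_two _ (by omega) m' hm'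
  · have hKmod : cc n % 4 = 2 := ((mod4 n).2 (by simp [hm, parity_simps])).1
    have hγ : ε = (2 + s) * ((cc m : ℝ) + (dd m : ℝ) * s) ^ 2 := by
      rw [hε, hm, ← pow_eq m, show 2*m+1 = m*2+1 from by ring, pow_succ, pow_mul]
      ring
    have hpm : ((cc m : ℝ)) ^ 2 - 3 * (dd m : ℝ) ^ 2 = 1 := by exact_mod_cast pell m
    have h4 : ((cc m : ℝ) + (dd m : ℝ) * s) * ((cc m : ℝ) - (dd m : ℝ) * s) = 1 := by
      linear_combination (-(dd m : ℝ)^2) * hs2 + hpm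
    have h3 : (2 + s) * (s - 1) ^ 2 = 2 := by linear_combination s * hs2
    set u : ℚ := ((3*q - p) * (cc m) - 3 * (p - q) * (dd m))/2 with hu
    set v : ℚ := ((p - q) * (cc m) - (3*q - p) * (dd m))/2 with hv
    have hid : ((u : ℝ) + (v : ℝ) * s)
        = ((p : ℝ) + (q : ℝ) * s) * (s - 1) * ((cc m : ℝ) - (dd m : ℝ) * s) / 2 := by
      push_cast [hu, hv]
      linear_combination (-(q * (cc m : ℝ) - (p - q) * (dd m : ℝ))/2 + q * (dd m : ℝ)/2 * s) * hs2
    have hsq : ((u : ℝ) + (v : ℝ) * s) ^ 2 = ((cc n : ℤ) : ℝ) := by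
      rw [hid]
      push_cast
      rw [hγ] at h1
      linear_combination ((s - 1) * ((cc m : ℝ) - (dd m : ℝ)*s)/2)^2 * h1
        + ((cc n : ℝ) * (((cc m:ℝ)+(dd m:ℝ)*s)*((cc m:ℝ)-(dd m:ℝ)*s))^2/2) * h3
        + ((cc n : ℝ) * (2+s) * (s-1)^2 / 2 * (((cc m:ℝ)+(dd m:ℝ)*s)*((cc m:ℝ)-(dd m:ℝ)*s) + 1)) * h4
        + (- s*(cc m:ℝ)^4*(cc n:ℝ)/2 + s*(cc n:ℝ)/2 + s^3*(cc m:ℝ)^2*(dd m:ℝ)^2*(cc n:ℝ) - s^5*(dd m:ℝ)^4*(cc n:ℝ)/2) * hs2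
    obtain ⟨huv, hval⟩ := ratsq u v _ hsq
    rcases mul_eq_zero.mp huv with hu0 | hv0
    · have : (3*v) ^ 2 = ((3 * cc n : ℤ) : ℚ) := by
        rw [hu0] at hval; push_cast at hval ⊢; linear_combination 3 * hval
      obtain ⟨m', hm'⟩ := rat_sq_int _ _ this
      exact no_sq_two _ (by omega) m' hm'
    · have : u ^ 2 = ((cc n : ℤ) : ℚ) := by
        rw [hv0] at hval; push_cast at hval ⊢; linear_combination hval
      obtain ⟨m', hm'⟩ := rat_sq_int _ _ this
      exact no_sq_two _ (by omega) m' hm'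

lemma rat_ne (P Q : ℚ) (hQ : Q ≠ 0) (v : ℚ) : (P : ℝ) + (Q : ℝ) * s ≠ (v : ℝ) := by
  intro h
  have h0 : ((P - v : ℚ) : ℝ) + (Q : ℝ) * s = 0 := by push_cast; linarith
  exact hQ (L1 _ _ h0).2

lemma key (n : ℕ) (hn : 1 ≤ n) (A : ℝ) (hAd : A = Real.sqrt (1 + ((2 + s) ^ n) ^ 2))
    (P Q R T : ℚ) (hRT : R ≠ 0 ∨ T ≠ 0) (v : ℚ) :
    (P : ℝ) + (Q : ℝ) * s + ((R : ℝ) + (T : ℝ) * s) * A ≠ (v : ℝ) := by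
  subst hAd
  intro h
  set A : ℝ := Real.sqrt (1 + ((2 + s) ^ n) ^ 2) with hA
  have hD : (R : ℚ) ^ 2 - 3 * T ^ 2 ≠ 0 := by
    intro hD0
    by_cases hT : T = 0
    · subst hT
      rcases hRT with hR | hT'
      · exact hR (by nlinarith [sq_nonneg R])
      · exact hT' rfl
    · have h3 : ((R / T) : ℚ) ^ 2 = 3 := by field_simp; nlinarith [hD0]
      have : s = ((|R / T| : ℚ) : ℝ) := by
        rw [show s = Real.sqrt 3 from rfl, Rat.cast_abs]
        rw [show ((3:ℝ)) = ((R/T : ℚ):ℝ)^2 from by exact_mod_cast h3.symm]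
        rw [Real.sqrt_sq_eq_abs]
      exact s_irr ⟨|R / T|, this.symm⟩
  have hD' : ((R : ℝ) ^ 2 - 3 * T ^ 2) ≠ 0 := by
    intro h0; exact hD (by exact_mod_cast h0)
  have hbig : A * ((R : ℝ) ^ 2 - 3 * T ^ 2)
      = (((v - P) * R + 3 * Q * T : ℚ) : ℝ) + (((- (Q * R) - (v - P) * T) : ℚ) : ℝ) * s := by
    push_cast
    have hAeq : ((R : ℝ) + (T : ℝ) * s) * A = ((v : ℝ) - P) - (Q : ℝ) * s := by linarith
    linear_combination ((R : ℝ) - (T : ℝ) * s) * hAeq + ((T:ℝ)^2 * A + Q * T) * hs2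
  set u1 : ℚ := ((v - P) * R + 3 * Q * T) / (R ^ 2 - 3 * T ^ 2) with hu1
  set u2 : ℚ := (- (Q * R) - (v - P) * T) / (R ^ 2 - 3 * T ^ 2) with hu2
  have : A = (u1 : ℝ) + (u2 : ℝ) * s := by
    have hcast : (u1 : ℝ) + (u2 : ℝ) * s
        = ((((v:ℝ) - P) * R + 3 * Q * T) + (-((Q:ℝ) * R) - ((v:ℝ) - P) * T) * s)
          / ((R : ℝ) ^ 2 - 3 * T ^ 2) := by
      rw [hu1, hu2]
      push_cast
      field_simp
    rw [hcast, eq_div_iff hD']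
    push_cast at hbig
    linear_combination hbig
  exact A_irr n hn u1 u2 this

lemma le_destruct {α : Type*} [DecidableEq α] {M : Multiset α} {a : α} {t : Multiset α}
    (h : M ≤ a ::ₘ t) : ∃ M', M' ≤ t ∧ (M = M' ∨ M = a ::ₘ M') := by
  by_cases hm : a ∈ M
  · refine ⟨M.erase a, ?_, Or.inr (Multiset.cons_erase hm).symm⟩
    have h2 := Multiset.erase_le_erase a h
    rwa [Multiset.erase_cons_head] at h2
  · exact ⟨M, (Multiset.le_cons_of_notMem hm).mp h, Or.inl rfl⟩

end TauHouseAux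

open TauHouseAux

set_option maxHeartbeats 1000000 in
/-- Section 5 of the paper: `τ = 1 + 2ε⁻² + 2ε⁻¹√(1 + ε⁻²)` (with `ε = (2+√3)ⁿ`) is
an algebraic integer of degree four over `ℚ`, whose complex conjugates are exactly
`τ, τ⁻¹, ω, ω⁻¹`, where `ω = 1 + 2ε² + 2ε√(1 + ε²)`; in particular `ω` is the house
of `τ`. -/
theorem tau_is_degree_four_with_house_omega (n : ℕ) (hn : 1 ≤ n) (ε τ ω : ℝ)
    (hε : ε = (2 + Real.sqrt 3) ^ n)
    (hτ : τ = 1 + 2 * (ε ^ 2)⁻¹ + 2 * ε⁻¹ * Real.sqrt (1 + (ε ^ 2)⁻¹))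
    (hω : ω = 1 + 2 * ε ^ 2 + 2 * ε * Real.sqrt (1 + ε ^ 2)) :
    IsIntegral ℤ τ ∧ (minpoly ℚ τ).natDegree = 4 ∧
      {z : ℂ | Polynomial.aeval z (minpoly ℚ τ) = 0}
        = {(τ : ℂ), ((τ⁻¹ : ℝ) : ℂ), (ω : ℂ), ((ω⁻¹ : ℝ) : ℂ)} ∧
      ∀ z : ℂ, Polynomial.aeval z (minpoly ℚ τ) = 0 → ‖z‖ ≤ ω := by
  have hsd : Real.sqrt 3 = s := rfl
  subst hε
  rw [hsd] at hτ hω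
  set ε : ℝ := (2 + s) ^ n with hεdef
  have hs0 : 0 < s := s_pos
  have hε1 : 1 < ε := by
    rw [hεdef]
    exact one_lt_pow₀ (by linarith) (by omega)
  have hε0 : 0 < ε := lt_trans one_pos hε1
  set E : ℝ := ε ^ 2 with hEdef
  have hE1 : 1 < E := by rw [hEdef]; nlinarith
  have hE0 : 0 < E := lt_trans one_pos hE1
  have hEE : E * E⁻¹ = 1 := mul_inv_cancel₀ (ne_of_gt hE0)
  have hEinv0 : 0 < E⁻¹ := by positivity
  have hEinv1 : E⁻¹ < 1 := by nlinarith
  set A : ℝ := Real.sqrt (1 + E) with hAdef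
  have hA0 : 0 ≤ A := Real.sqrt_nonneg _
  have hA2 : A ^ 2 = 1 + E := Real.sq_sqrt (by nlinarith)
  have hA1 : 1 < A := by nlinarith
  -- τ in terms of A
  have hsqrt : Real.sqrt (1 + E⁻¹) = A / ε := by
    rw [show (1 : ℝ) + E⁻¹ = (1 + E) / E by field_simp; ring, Real.sqrt_div (by nlinarith) E,
      hAdef, hEdef, Real.sqrt_sq hε0.le]
  have hτA : τ = 1 + 2 * E⁻¹ + 2 * E⁻¹ * A := by
    rw [hτ, hsqrt, hEdef]
    field_simp
  set τ' : ℝ := 1 + 2 * E⁻¹ - 2 * E⁻¹ * A with hτ'def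
  set ω' : ℝ := 1 + 2 * E - 2 * ε * A with hω'def
  have hωA : ω = 1 + 2 * E + 2 * ε * A := hω
  clear_value ε E A τ' ω'
  -- products and sums
  have hq1 : τ * τ' = 1 := by
    rw [hτA, hτ'def]
    linear_combination (-4*E⁻¹^2) * hA2 - 4*E⁻¹ * hEE
  have hq3 : ω * ω' = 1 := by
    rw [hωA, hω'def]
    linear_combination (-4*ε^2) * hA2 + (4*(1+E)) * hEdef
  have hq2 : τ + τ' = 2 + 4 * E⁻¹ := by rw [hτA, hτ'def]; ring
  have hq4 : ω + ω' = 2 + 4 * E := by rw [hωA, hω'def]; ring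
  -- order facts
  have hτ1 : 1 < τ := by
    rw [hτA]; nlinarith [mul_pos hEinv0 (lt_trans one_pos hA1)]
  have hτ0 : 0 < τ := lt_trans one_pos hτ1
  have hτinv : τ⁻¹ = τ' := inv_eq_of_mul_eq_one_right hq1
  have hωinv : ω⁻¹ = ω' := inv_eq_of_mul_eq_one_right hq3
  have hτ'0 : 0 < τ' := hτinv ▸ inv_pos.mpr hτ0
  have hτ'1 : τ' < 1 := by rw [← hτinv]; exact inv_lt_one_of_one_lt₀ hτ1
  have hω1 : 1 < ω := by
    rw [hωA]; nlinarith [mul_pos hε0 (lt_trans one_pos hA1)]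
  have hω0 : 0 < ω := lt_trans one_pos hω1
  have hω'0 : 0 < ω' := hωinv ▸ inv_pos.mpr hω0
  have hω'1 : ω' < 1 := by rw [← hωinv]; exact inv_lt_one_of_one_lt₀ hω1
  have hτω : τ < ω := by
    rw [hτA, hωA]
    nlinarith [mul_pos (show (0:ℝ) < ε - E⁻¹ by nlinarith [hε1, hEinv1]) (lt_trans one_pos hA1)]
  have hω'τ' : ω' < τ' := by
    rw [← hτinv, ← hωinv]; exact inv_strictAnti₀ hτ0 hτω
  have neττ' : τ ≠ τ' := ne_of_gt (by linarith)
  have neτω : τ ≠ ω := ne_of_lt hτω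
  have neτω' : τ ≠ ω' := ne_of_gt (by linarith)
  -- rational coefficient data
  have hcN := (cc_pos n).1
  have hdN := dd_pos n hn
  have hcE := (cc_pos (2*n)).1
  have hdE := dd_pos (2*n) (by omega)
  have hNrep : ε = ((cc n : ℝ)) + (dd n : ℝ) * s := by rw [hεdef]; exact pow_eq n
  have hErep : E = ((cc (2*n) : ℝ)) + (dd (2*n) : ℝ) * s := by
    rw [hEdef, hεdef, ← pow_mul, Nat.mul_comm]
    exact pow_eq (2*n)
  have hpellE : ((cc (2*n) : ℝ)) ^ 2 - 3 * ((dd (2*n) : ℝ)) ^ 2 = 1 := by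
    exact_mod_cast pell (2*n)
  have hIrep : E⁻¹ = ((cc (2*n) : ℝ)) - (dd (2*n) : ℝ) * s := by
    apply inv_eq_of_mul_eq_one_right
    rw [hErep]
    linear_combination (-((dd (2*n) : ℝ))^2) * hs2 + hpellE
  -- representations over basis 1, s, A, sA
  have hτrep : τ = (1 + 2*(cc (2*n) : ℝ)) + (-2*(dd (2*n) : ℝ))*s
      + ((2*(cc (2*n) : ℝ)) + (-2*(dd (2*n) : ℝ))*s)*A := by
    rw [hτA, hIrep]; ring
  have hτ'rep : τ' = (1 + 2*(cc (2*n) : ℝ)) + (-2*(dd (2*n) : ℝ))*s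
      + ((-2*(cc (2*n) : ℝ)) + (2*(dd (2*n) : ℝ))*s)*A := by
    rw [hτ'def, hIrep]; ring
  have hωrep : ω = (1 + 2*(cc (2*n) : ℝ)) + (2*(dd (2*n) : ℝ))*s
      + ((2*(cc n : ℝ)) + (2*(dd n : ℝ))*s)*A := by
    rw [hωA, hErep, hNrep]; ring
  have hω'rep : ω' = (1 + 2*(cc (2*n) : ℝ)) + (2*(dd (2*n) : ℝ))*s
      + ((-2*(cc n : ℝ)) + (-2*(dd n : ℝ))*s)*A := by
    rw [hω'def, hErep, hNrep]; ring
  -- rational positivity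
  have hcEQ : (1:ℚ) ≤ (cc (2*n) : ℚ) := by exact_mod_cast hcE
  have hdEQ : (1:ℚ) ≤ (dd (2*n) : ℚ) := by exact_mod_cast hdE
  have hcNQ : (1:ℚ) ≤ (cc n : ℚ) := by exact_mod_cast hcN
  have hdNQ : (1:ℚ) ≤ (dd n : ℚ) := by exact_mod_cast hdN
  -- A as required by `key`
  have hAkey : A = Real.sqrt (1 + ((2 + s) ^ n) ^ 2) := by rw [hAdef, hEdef, hεdef]
  -- the quartic polynomial
  set aZ : ℤ := 2 * cc (2*n) with haZdef
  have haZ : (aZ : ℝ) = E + E⁻¹ := by rw [hIrep, hErep, haZdef]; push_cast; ring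
  have s1 : τ + τ' + ω + ω' = 4 + 4 * (aZ : ℝ) := by
    linear_combination hq2 + hq4 - 4 * haZ
  have s2 : τ*τ' + τ*ω + τ*ω' + τ'*ω + τ'*ω' + ω*ω' = 22 + 8 * (aZ : ℝ) := by
    linear_combination hq1 + hq3 + (ω + ω') * hq2 + (2 + 4*E⁻¹) * hq4 + 16 * hEE - 8 * haZ
  have s3 : τ*τ'*ω + τ*τ'*ω' + τ*ω*ω' + τ'*ω*ω' = 4 + 4 * (aZ : ℝ) := by
    linear_combination (ω + ω') * hq1 + (τ + τ') * hq3 + hq2 + hq4 - 4 * haZ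
  have s4 : τ*τ'*ω*ω' = 1 := by
    linear_combination (ω*ω') * hq1 + hq3
  have hquτ : τ^4 - (4 + 4*(aZ:ℝ))*τ^3 + (22 + 8*(aZ:ℝ))*τ^2 - (4 + 4*(aZ:ℝ))*τ + 1 = 0 := by
    linear_combination τ^3 * s1 - τ^2 * s2 + τ * s3 - s4
  -- integrality over ℤ
  have hIntZ : IsIntegral ℤ τ := by
    refine ⟨X^4 - C (4 + 4*aZ) * X^3 + C (22 + 8*aZ) * X^2 - C (4 + 4*aZ) * X + 1, ?_, ?_⟩
    · monicity!
    · simp only [Polynomial.eval₂_add, Polynomial.eval₂_sub, Polynomial.eval₂_mul,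
        Polynomial.eval₂_pow, Polynomial.eval₂_X, Polynomial.eval₂_C, Polynomial.eval₂_one]
      simp only [eq_intCast]
      push_cast
      linear_combination hquτ
  -- the quartic over ℚ
  set Pq : ℚ[X] := X^4 - C ((4 + 4*aZ : ℤ) : ℚ) * X^3 + C ((22 + 8*aZ : ℤ) : ℚ) * X^2
      - C ((4 + 4*aZ : ℤ) : ℚ) * X + 1 with hPqdef
  have hPmonic : Pq.Monic := by rw [hPqdef]; monicity!
  have hPdeg : Pq.natDegree = 4 := by rw [hPqdef]; compute_degree!
  have hPtau : aeval τ Pq = 0 := by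
    rw [hPqdef, aeval_def]
    simp only [Polynomial.eval₂_add, Polynomial.eval₂_sub, Polynomial.eval₂_mul,
      Polynomial.eval₂_pow, Polynomial.eval₂_X, Polynomial.eval₂_C, Polynomial.eval₂_one]
    simp only [eq_ratCast]
    push_cast
    linear_combination hquτ
  have hQint : IsIntegral ℚ τ := ⟨Pq, hPmonic, hPtau⟩
  -- map to ℝ
  have hC : Pq.map (algebraMap ℚ ℝ) = X^4 - C ((4 + 4*(aZ:ℝ))) * X^3 + C ((22 + 8*(aZ:ℝ))) * X^2
      - C ((4 + 4*(aZ:ℝ))) * X + 1 := by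
    rw [hPqdef]
    simp only [Polynomial.map_add, Polynomial.map_sub, Polynomial.map_mul, Polynomial.map_pow,
      Polynomial.map_one, Polynomial.map_X, Polynomial.map_C]
    norm_num
  have hPq_map : Pq.map (algebraMap ℚ ℝ)
      = (((τ ::ₘ τ' ::ₘ ω ::ₘ ω' ::ₘ 0) : Multiset ℝ).map (fun a => X - C a)).prod := by
    rw [hC]
    have hexp : (((τ ::ₘ τ' ::ₘ ω ::ₘ ω' ::ₘ 0) : Multiset ℝ).map (fun a => X - C a)).prod
        = (X - C τ) * (X - C τ') * (X - C ω) * (X - C ω') := by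
      simp only [Multiset.map_cons, Multiset.prod_cons, Multiset.map_zero, Multiset.prod_zero]
      ring
    rw [hexp, show (4 + 4*(aZ:ℝ)) = τ + τ' + ω + ω' from s1.symm,
      show (22 + 8*(aZ:ℝ)) = τ*τ' + τ*ω + τ*ω' + τ'*ω + τ'*ω' + ω*ω' from s2.symm]
    rw [show (1 : ℝ[X]) = C (τ*τ'*ω*ω') by rw [s4]; simp]
    nth_rewrite 2 [show (τ + τ' + ω + ω') = τ*τ'*ω + τ*τ'*ω' + τ*ω*ω' + τ'*ω*ω' by
      rw [s3, s1]]
    simp only [map_add, map_mul]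
    ring
  have hroots : (Pq.map (algebraMap ℚ ℝ)).roots = (τ ::ₘ τ' ::ₘ ω ::ₘ ω' ::ₘ 0) := by
    rw [hPq_map]
    exact roots_multiset_prod_X_sub_C _
  have hPRne : Pq.map (algebraMap ℚ ℝ) ≠ 0 := (hPmonic.map _).ne_zero
  have hPRsplits : (Pq.map (algebraMap ℚ ℝ)).Splits := by
    rw [splits_iff_card_roots, hroots, hPmonic.natDegree_map, hPdeg]
    rfl
  -- the minimal polynomial
  set qp : ℚ[X] := minpoly ℚ τ with hqpdef
  have hqmonic : qp.Monic := minpoly.monic hQint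
  have hdvd : qp ∣ Pq := minpoly.dvd ℚ τ hPtau
  have hdvdR : qp.map (algebraMap ℚ ℝ) ∣ Pq.map (algebraMap ℚ ℝ) := Polynomial.map_dvd _ hdvd
  have hqRsplits : (qp.map (algebraMap ℚ ℝ)).Splits :=
    hPRsplits.of_dvd hPRne hdvdR
  have hcard : (qp.map (algebraMap ℚ ℝ)).roots.card = qp.natDegree := by
    rw [splits_iff_card_roots.mp hqRsplits, hqmonic.natDegree_map]
  have hMle : (qp.map (algebraMap ℚ ℝ)).roots ≤ (τ ::ₘ τ' ::ₘ ω ::ₘ ω' ::ₘ 0) := by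
    rw [← hroots]
    exact roots.le_of_dvd hPRne hdvdR
  have hτmem : τ ∈ (qp.map (algebraMap ℚ ℝ)).roots := by
    rw [mem_roots']
    refine ⟨(hqmonic.map _).ne_zero, ?_⟩
    rw [IsRoot, eval_map, ← aeval_def]
    exact minpoly.aeval ℚ τ
  have hsum : (qp.map (algebraMap ℚ ℝ)).roots.sum = ((-(qp.nextCoeff) : ℚ) : ℝ) := by
    have h1 := multiset_prod_X_sub_C_nextCoeff (qp.map (algebraMap ℚ ℝ)).roots
    rw [← hqRsplits.eq_prod_roots_of_monic (hqmonic.map _)] at h1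
    rw [nextCoeff_map (algebraMap ℚ ℝ).injective, eq_ratCast] at h1
    push_cast
    linarith [h1]
  set v : ℚ := -(qp.nextCoeff) with hvdef
  -- case analysis on which roots qp has
  have hdeg4 : qp.natDegree = 4 := by
    obtain ⟨M1, hM1le, hM1⟩ := le_destruct hMle
    rcases hM1 with h1 | h1
    · -- τ not in the first slot: contradiction
      exfalso
      have hm : τ ∈ (τ' ::ₘ ω ::ₘ ω' ::ₘ 0 : Multiset ℝ) :=
        Multiset.mem_of_le hM1le (h1 ▸ hτmem)
      simp only [Multiset.mem_cons, Multiset.notMem_zero, or_false] at hm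
      rcases hm with h | h | h
      · exact neττ' h
      · exact neτω h
      · exact neτω' h
    · obtain ⟨M2, hM2le, hM2⟩ := le_destruct hM1le
      obtain ⟨M3, hM3le, hM3⟩ := le_destruct hM2le
      obtain ⟨M4, hM4le, hM4⟩ := le_destruct hM3le
      have hM40 : M4 = 0 := Multiset.le_zero.mp hM4le
      rw [hM40] at hM4
      rcases hM2 with h2 | h2 <;> rcases hM3 with h3 | h3 <;> rcases hM4 with h4 | h4 <;>
        rw [h1, h2, h3, h4] at hsum hcard <;>
        simp only [Multiset.sum_cons, Multiset.sum_zero, add_zero, Multiset.card_cons,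
          Multiset.card_zero] at hsum hcard
      -- flags (τ'∈, ω∈, ω'∈): (0,0,0),(0,0,1),(0,1,0),(0,1,1),(1,0,0),(1,0,1),(1,1,0),(1,1,1)
      · -- {τ}
        exfalso
        refine key n hn A hAkey (1 + 2*(cc (2*n) : ℚ)) (-2*(dd (2*n) : ℚ))
          (2*(cc (2*n) : ℚ)) (-2*(dd (2*n) : ℚ)) (Or.inl (by intro h; linarith)) v ?_
        push_cast
        push_cast at hsum
        linear_combination hsum - hτrep
      · -- {τ, ω'}
        exfalso
        refine key n hn A hAkey (2 + 4*(cc (2*n) : ℚ)) 0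
          (2*(cc (2*n) : ℚ) - 2*(cc n : ℚ)) (-2*(dd (2*n) : ℚ) - 2*(dd n : ℚ))
          (Or.inr (by intro h; linarith)) v ?_
        push_cast
        push_cast at hsum
        linear_combination hsum - hτrep - hω'rep
      · -- {τ, ω}
        exfalso
        refine key n hn A hAkey (2 + 4*(cc (2*n) : ℚ)) 0
          (2*(cc (2*n) : ℚ) + 2*(cc n : ℚ)) (-2*(dd (2*n) : ℚ) + 2*(dd n : ℚ))
          (Or.inl (by intro h; linarith)) v ?_
        push_cast
        push_cast at hsum
        linear_combination hsum - hτrep - hωrep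
      · -- {τ, ω, ω'}
        exfalso
        refine key n hn A hAkey (3 + 6*(cc (2*n) : ℚ)) (2*(dd (2*n) : ℚ))
          (2*(cc (2*n) : ℚ)) (-2*(dd (2*n) : ℚ)) (Or.inl (by intro h; linarith)) v ?_
        push_cast
        push_cast at hsum
        linear_combination hsum - hτrep - hωrep - hω'rep
      · -- {τ, τ'}
        exfalso
        have hQ : (-4*(dd (2*n) : ℚ)) ≠ 0 := by intro h; linarith
        refine rat_ne (2 + 4*(cc (2*n) : ℚ)) (-4*(dd (2*n) : ℚ)) hQ v ?_
        push_cast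
        push_cast at hsum
        linear_combination hsum - hτrep - hτ'rep
      · -- {τ, τ', ω'}
        exfalso
        refine key n hn A hAkey (3 + 6*(cc (2*n) : ℚ)) (-2*(dd (2*n) : ℚ))
          (-2*(cc n : ℚ)) (-2*(dd n : ℚ)) (Or.inl (by intro h; linarith)) v ?_
        push_cast
        push_cast at hsum
        linear_combination hsum - hτrep - hτ'rep - hω'rep
      · -- {τ, τ', ω}
        exfalso
        refine key n hn A hAkey (3 + 6*(cc (2*n) : ℚ)) (-2*(dd (2*n) : ℚ))
          (2*(cc n : ℚ)) (2*(dd n : ℚ)) (Or.inl (by intro h; linarith)) v ?_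
        push_cast
        push_cast at hsum
        linear_combination hsum - hτrep - hτ'rep - hωrep
      · -- full set
        omega
  -- identify the minimal polynomial
  have hqPq : qp = Pq := by
    obtain ⟨u, hu⟩ := hdvd
    have hq0 : qp ≠ 0 := hqmonic.ne_zero
    have hu0 : u ≠ 0 := by
      rintro rfl
      rw [mul_zero] at hu
      exact hPmonic.ne_zero hu
    have hdegu : u.natDegree = 0 := by
      have h := natDegree_mul hq0 hu0
      rw [← hu, hPdeg, hdeg4] at h
      omega
    have hlc : u.leadingCoeff = 1 := by
      have h := congrArg leadingCoeff hu
      rw [leadingCoeff_mul, hqmonic.leadingCoeff, one_mul, hPmonic.leadingCoeff] at h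
      exact h.symm
    have hu1 : u = 1 := by
      have hc : u = C (u.coeff 0) := eq_C_of_natDegree_eq_zero hdegu
      have hcoeff : u.coeff 0 = 1 := by
        rw [← hlc, leadingCoeff, hdegu]
      rw [hc, hcoeff, map_one]
    rw [hu, hu1, mul_one]
  -- roots over ℂ
  have s1C : ((τ:ℂ) + (τ':ℂ) + (ω:ℂ) + (ω':ℂ)) = 4 + 4 * (aZ : ℂ) := by
    have h := congrArg (fun x : ℝ => (x : ℂ)) s1
    push_cast at h
    exact h
  have s2C : (τ:ℂ)*(τ':ℂ) + (τ:ℂ)*(ω:ℂ) + (τ:ℂ)*(ω':ℂ) + (τ':ℂ)*(ω:ℂ) + (τ':ℂ)*(ω':ℂ)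
      + (ω:ℂ)*(ω':ℂ) = 22 + 8 * (aZ : ℂ) := by
    have h := congrArg (fun x : ℝ => (x : ℂ)) s2
    push_cast at h
    exact h
  have s3C : (τ:ℂ)*(τ':ℂ)*(ω:ℂ) + (τ:ℂ)*(τ':ℂ)*(ω':ℂ) + (τ:ℂ)*(ω:ℂ)*(ω':ℂ)
      + (τ':ℂ)*(ω:ℂ)*(ω':ℂ) = 4 + 4 * (aZ : ℂ) := by
    have h := congrArg (fun x : ℝ => (x : ℂ)) s3
    push_cast at h
    exact h
  have s4C : (τ:ℂ)*(τ':ℂ)*(ω:ℂ)*(ω':ℂ) = 1 := by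
    have h := congrArg (fun x : ℝ => (x : ℂ)) s4
    push_cast at h
    exact h
  have hevalC : ∀ z : ℂ, aeval z qp
      = (z - (τ:ℂ)) * (z - (τ':ℂ)) * (z - (ω:ℂ)) * (z - (ω':ℂ)) := by
    intro z
    rw [hqPq, hPqdef, aeval_def]
    simp only [Polynomial.eval₂_add, Polynomial.eval₂_sub, Polynomial.eval₂_mul,
      Polynomial.eval₂_pow, Polynomial.eval₂_X, Polynomial.eval₂_C, Polynomial.eval₂_one]
    simp only [eq_ratCast]
    push_cast
    linear_combination z^3 * s1C - z^2 * s2C + z * s3C - s4C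
  refine ⟨hIntZ, hdeg4, ?_, ?_⟩
  · rw [hτinv, hωinv]
    ext z
    simp only [Set.mem_setOf_eq, hevalC z, Set.mem_insert_iff, Set.mem_singleton_iff,
      mul_eq_zero, sub_eq_zero]
    tauto
  · intro z hz
    rw [hevalC z] at hz
    simp only [mul_eq_zero, sub_eq_zero] at hz
    rcases hz with ((h | h) | h) | h <;> subst h <;> rw [Complex.norm_real, Real.norm_eq_abs]
    · rw [abs_of_pos hτ0]; linarith
    · rw [abs_of_pos hτ'0]; linarith
    · rw [abs_of_pos hω0]
    · rw [abs_of_pos hω'0]; linarith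
end

section
/- For n ≥ 1 set ε_n = (2 + Real.sqrt 3)ⁿ, τ_n = 1 + 2ε_n⁻² + 2ε_n⁻¹·Real.sqrt (1 + ε_n⁻²), and ω_n = 1 + 2ε_n² + 2ε_n·Real.sqrt (1 + ε_n²). Then τ_n > 1 for every n, the sequence τ_n tends to 1, the sequence ω_n tends to infinity, and consequently the sequence of ratios (Real.log ω_n) / (Real.log τ_n) tends to infinity as n → ∞. -/
open Filter

/-- Section 5 of the paper: with `ε_n = (2+√3)ⁿ`,
`τ_n = 1 + 2ε_n⁻² + 2ε_n⁻¹√(1 + ε_n⁻²)` and `ω_n = 1 + 2ε_n² + 2ε_n√(1 + ε_n²)`,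
one has `τ_n > 1`, `τ_n → 1`, `ω_n → ∞`, and hence `log ω_n / log τ_n → ∞`;
the stretches of the groups `Γₙ` are unbounded. -/
theorem ratio_log_house_tendsto_atTop
    (ε τ ω : ℕ → ℝ)
    (hε : ∀ n, ε n = (2 + Real.sqrt 3) ^ n)
    (hτ : ∀ n, τ n = 1 + 2 * (ε n ^ 2)⁻¹ + 2 * (ε n)⁻¹ * Real.sqrt (1 + (ε n ^ 2)⁻¹))
    (hω : ∀ n, ω n = 1 + 2 * ε n ^ 2 + 2 * ε n * Real.sqrt (1 + ε n ^ 2)) :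
    (∀ n, 1 ≤ n → 1 < τ n) ∧
      Tendsto τ atTop (nhds 1) ∧
      Tendsto ω atTop atTop ∧
      Tendsto (fun n => Real.log (ω n) / Real.log (τ n)) atTop atTop := by
  have hbase : (1 : ℝ) < 2 + Real.sqrt 3 := by
    have := Real.sqrt_nonneg 3; linarith
  have hε1 : ∀ n, 1 ≤ ε n := fun n => by
    rw [hε n]; exact one_le_pow₀ hbase.le
  have hεpos : ∀ n, 0 < ε n := fun n => lt_of_lt_of_le one_pos (hε1 n)
  have hεtop : Tendsto ε atTop atTop := by
    have := tendsto_pow_atTop_atTop_of_one_lt hbase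
    simpa [funext hε] using this
  -- τ n > 1 for all n
  have hτgt : ∀ n, 1 < τ n := fun n => by
    rw [hτ n]
    have h1 : 0 < (ε n ^ 2)⁻¹ := inv_pos.mpr (pow_pos (hεpos n) 2)
    have h2 : 0 < (ε n)⁻¹ := inv_pos.mpr (hεpos n)
    have h3 : 0 < Real.sqrt (1 + (ε n ^ 2)⁻¹) :=
      Real.sqrt_pos.mpr (by positivity)
    nlinarith
  -- τ → 1
  have hinv : Tendsto (fun n => (ε n)⁻¹) atTop (nhds 0) :=
    tendsto_inv_atTop_zero.comp hεtop
  have hinv2 : Tendsto (fun n => (ε n ^ 2)⁻¹) atTop (nhds 0) :=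
    tendsto_inv_atTop_zero.comp (hεtop.atTop_mul_atTop₀ hεtop |>.congr (by
      intro n; rw [sq]))
  have hsqrt : Tendsto (fun n => Real.sqrt (1 + (ε n ^ 2)⁻¹)) atTop (nhds 1) := by
    have : Tendsto (fun n => 1 + (ε n ^ 2)⁻¹) atTop (nhds 1) := by
      simpa using tendsto_const_nhds.add hinv2
    have := (Real.continuous_sqrt.tendsto 1).comp this
    simpa [Function.comp_def] using this
  have hτ1 : Tendsto τ atTop (nhds 1) := by
    have : Tendsto (fun n => 1 + 2 * (ε n ^ 2)⁻¹ + 2 * (ε n)⁻¹ * Real.sqrt (1 + (ε n ^ 2)⁻¹))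
        atTop (nhds (1 + 2 * 0 + 2 * 0 * 1)) :=
      ((tendsto_const_nhds.add (tendsto_const_nhds.mul hinv2)).add
        ((tendsto_const_nhds.mul hinv).mul hsqrt))
    simpa [funext hτ] using this
  -- ω → ∞
  have hωtop : Tendsto ω atTop atTop := by
    apply tendsto_atTop_mono (f := ε) _ hεtop
    intro n
    rw [hω n]
    have h1 : 0 ≤ Real.sqrt (1 + ε n ^ 2) := Real.sqrt_nonneg _
    have h2 := hε1 n
    nlinarith
  refine ⟨fun n _ => hτgt n, hτ1, hωtop, ?_⟩
  have hlogω : Tendsto (fun n => Real.log (ω n)) atTop atTop :=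
    Real.tendsto_log_atTop.comp hωtop
  have hlogτ : Tendsto (fun n => Real.log (τ n)) atTop (nhds 0) := by
    have := (Real.continuousAt_log one_ne_zero).tendsto.comp hτ1
    simpa [Function.comp_def] using this
  have hlogτpos : ∀ n, 0 < Real.log (τ n) := fun n => Real.log_pos (hτgt n)
  have hinvlog : Tendsto (fun n => (Real.log (τ n))⁻¹) atTop atTop := by
    apply tendsto_inv_nhdsGT_zero.comp
    exact tendsto_nhdsWithin_of_tendsto_nhds_of_eventually_within _ hlogτ
      (Eventually.of_forall fun n => hlogτpos n)
  have := hlogω.atTop_mul_atTop₀ hinvlog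
  simpa [div_eq_mul_inv] using this
end
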